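/- arXiv:2305.03656 — 5 statements merged into one kernel-verified Lean document; each statement's English description precedes it below -/
import Mathlib

section
/- Let (M,d) be a metric space and X, Y ⊆ M. Assume there exists a ∈ (0,∞) such that for each ρ ∈ (0,a) and each x' ∈ X there exists x'' ∈ X with d(x',x'') = ρ. Let υ_Y ∈ (0,∞), β ∈ (0,1], s₂ ∈ [β,∞), s₃ ∈ (0,1], with s₂ − β > υ_Y and s₂ < υ_Y + β + s₃. Let ν be a measure on a σ-algebra of subsets of Y containing the Borel subsets of Y, with ν(B(x,r) ∩ Y) < ∞ for all x ∈ X and r > 0, and ν(Y) < ∞. Let Y be upper υ_Y-Ahlfors regular with respect to X and let Z ∈ 𝒦_{υ_Y,s₂,s₃}(X×Y). If there exists C > 0 such that for every g ∈ C^{0,β}(X∪Y) the function Q[Z,g,1] is bounded and min{β, υ_Y+s₃+β−s₂}-Hölder continuous on X with sup-norm plus Hölder seminorm at most C·|g|_β, then sup over x ∈ X and r ∈ (0, e^{−1/s₃}) of |∫_{Y\B(x,r)} Z(x,y) dν(y)| · r^β / max{r^β, r^{υ_Y+s₃+β−s₂}} is finite. -/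
open MeasureTheory Metric Set
open scoped ENNReal

noncomputable section

variable {M : Type*} [MetricSpace M] [MeasurableSpace M] [BorelSpace M]

/-- `Y` is upper `υ`-Ahlfors regular with respect to `X`:
there exist `r₀ ∈ (0,∞]` and `c > 0` with `ν (B(x,r) ∩ Y) ≤ c rᵘ` for `x ∈ X`, `0 < r < r₀`. -/
def UpperAhlforsRegular (ν : Measure M) (X Y : Set M) (υ : ℝ) : Prop :=
  ∃ c : ℝ, 0 < c ∧ ∃ r₀ : ℝ≥0∞, 0 < r₀ ∧
    ∀ x ∈ X, ∀ r : ℝ, 0 < r → ENNReal.ofReal r < r₀ →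
      ν (ball x r ∩ Y) ≤ ENNReal.ofReal (c * r ^ υ)

/-- `Y` is strongly upper `υ`-Ahlfors regular with respect to `X`. -/
def StronglyUpperAhlforsRegular (ν : Measure M) (X Y : Set M) (υ : ℝ) : Prop :=
  ∃ c : ℝ, 0 < c ∧ ∃ r₀ : ℝ≥0∞, 0 < r₀ ∧
    ∀ x ∈ X, ∀ r₁ r₂ : ℝ, 0 ≤ r₁ → r₁ < r₂ → ENNReal.ofReal r₂ < r₀ →
      ν ((ball x r₂ \ ball x r₁) ∩ Y) ≤ ENNReal.ofReal (c * (r₂ ^ υ - r₁ ^ υ))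

/-- the set of values `d(x,y)^{s₁} |K(x,y)|`, `x ∈ X`, `y ∈ Y`, `x ≠ y`. -/
def kernelSet₁ (X Y : Set M) (s₁ : ℝ) (K : M → M → ℂ) : Set ℝ :=
  {t | ∃ x ∈ X, ∃ y ∈ Y, x ≠ y ∧ t = dist x y ^ s₁ * ‖K x y‖}

/-- the set of values `(d(x',y)^{s₂}/d(x',x'')^{s₃}) |K(x',y) - K(x'',y)|`,
`x', x'' ∈ X`, `x' ≠ x''`, `y ∈ Y \ B(x', 2 d(x',x''))`. -/
def kernelSet₂ (X Y : Set M) (s₂ s₃ : ℝ) (K : M → M → ℂ) : Set ℝ :=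
  {t | ∃ x' ∈ X, ∃ x'' ∈ X, x' ≠ x'' ∧ ∃ y ∈ Y \ ball x' (2 * dist x' x''),
        t = dist x' y ^ s₂ / dist x' x'' ^ s₃ * ‖K x' y - K x'' y‖}

/-- membership in the kernel class `𝒦_{s₁,s₂,s₃}(X×Y)`: continuity off the diagonal
together with finiteness of the two suprema defining the norm. -/
def MemK (X Y : Set M) (s₁ s₂ s₃ : ℝ) (K : M → M → ℂ) : Prop :=
  ContinuousOn (fun p : M × M => K p.1 p.2) ((X ×ˢ Y) \ {p : M × M | p.1 = p.2}) ∧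
  BddAbove (kernelSet₁ X Y s₁ K) ∧ BddAbove (kernelSet₂ X Y s₂ s₃ K)

/-- the norm `‖K‖` of the class `𝒦_{s₁,s₂,s₃}(X×Y)`. -/
def kNorm (X Y : Set M) (s₁ s₂ s₃ : ℝ) (K : M → M → ℂ) : ℝ :=
  sSup (kernelSet₁ X Y s₁ K) + sSup (kernelSet₂ X Y s₂ s₃ K)

/-- the set of values `|∫_{Y \ B(x,r)} K(x,y) dν(y)|`, `x ∈ X`, `r > 0`
(the maximal function values). -/
def maxFunSet (ν : Measure M) (X Y : Set M) (K : M → M → ℂ) : Set ℝ :=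
  {t | ∃ x ∈ X, ∃ r : ℝ, 0 < r ∧ t = ‖∫ y in Y \ ball x r, K x y ∂ν‖}

/-- membership in the kernel class `𝒦♯_{s₁,s₂,s₃}(X×Y)`. -/
def MemKSharp (ν : Measure M) (X Y : Set M) (s₁ s₂ s₃ : ℝ) (K : M → M → ℂ) : Prop :=
  MemK X Y s₁ s₂ s₃ K ∧
  (∀ x ∈ X, ∀ r : ℝ, 0 < r → IntegrableOn (K x) (Y \ ball x r) ν) ∧
  BddAbove (maxFunSet ν X Y K)

/-- the norm of the class `𝒦♯_{s₁,s₂,s₃}(X×Y)`. -/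
def kNormSharp (ν : Measure M) (X Y : Set M) (s₁ s₂ s₃ : ℝ) (K : M → M → ℂ) : ℝ :=
  kNorm X Y s₁ s₂ s₃ K + sSup (maxFunSet ν X Y K)

/-- the set of Hölder quotients `|g x - g y| / d(x,y)^β`, `x, y ∈ D`, `x ≠ y`. -/
def holderSet (D : Set M) (β : ℝ) (g : M → ℂ) : Set ℝ :=
  {t | ∃ x ∈ D, ∃ y ∈ D, x ≠ y ∧ t = ‖g x - g y‖ / dist x y ^ β}

/-- `g` is `β`-Hölder continuous on `D`. -/
def IsHolderOn (D : Set M) (β : ℝ) (g : M → ℂ) : Prop :=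
  BddAbove (holderSet D β g)

/-- the `β`-Hölder seminorm `|g|_β` of `g` on `D`. -/
def holderSemi (D : Set M) (β : ℝ) (g : M → ℂ) : ℝ :=
  sSup (holderSet D β g)

def supValSet (D : Set M) (f : M → ℂ) : Set ℝ := {t | ∃ x ∈ D, t = ‖f x‖}

/-- `f` is bounded on `D`. -/
def BoundedOnSet (D : Set M) (f : M → ℂ) : Prop := BddAbove (supValSet D f)

/-- the sup-norm of `f` on `D`. -/
def supNormOn (D : Set M) (f : M → ℂ) : ℝ := sSup (supValSet D f)

/-- `Q[Z,g,1](x) = ∫_Y Z(x,y) (g(x) - g(y)) dν(y)`. -/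
def Qop (ν : Measure M) (Y : Set M) (Z : M → M → ℂ) (g : M → ℂ) (x : M) : ℂ :=
  ∫ y in Y, Z x y * (g x - g y) ∂ν

/-- the modulus of continuity `ω_θ`. -/
def omegaMod (θ r : ℝ) : ℝ :=
  if r ≤ 0 then 0
  else if r ≤ Real.exp (-1 / θ) then r ^ θ * |Real.log r|
  else Real.exp (-1 / θ) ^ θ * |Real.log (Real.exp (-1 / θ))|



lemma sliceIntegrableOn (X Y : Set M) (ν : Measure M) (hYfin : ν Y < ⊤)
    (Z : M → M → ℂ)
    (hZc : ContinuousOn (fun p : M × M => Z p.1 p.2) ((X ×ˢ Y) \ {p : M × M | p.1 = p.2}))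
    (x : M) (hx : x ∈ X) (S : Set M) (hS : MeasurableSet S) (hSY : S ⊆ Y)
    (hSx : ∀ y ∈ S, x ≠ y) (C : ℝ) (hC : ∀ y ∈ S, ‖Z x y‖ ≤ C) :
    IntegrableOn (fun y => Z x y) S ν := by
  have hcont : ContinuousOn (fun y => Z x y) S := by
    have hmap : MapsTo (fun y => ((x, y) : M × M)) S ((X ×ˢ Y) \ {p : M × M | p.1 = p.2}) := by
      intro y hy
      exact ⟨⟨hx, hSY hy⟩, hSx y hy⟩
    exact hZc.comp (Continuous.continuousOn (by fun_prop)) hmap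
  have hmeas : AEStronglyMeasurable (fun y => Z x y) (ν.restrict S) :=
    hcont.aestronglyMeasurable hS
  refine ⟨hmeas, HasFiniteIntegral.restrict_of_bounded (C := C) ?_ ?_⟩
  · exact lt_of_le_of_lt (measure_mono hSY) hYfin
  · exact (ae_restrict_iff' hS).mpr (Filter.Eventually.of_forall hC)

lemma clampLip (r : ℝ) (hr : 0 < r) (a b : ℝ) :
    |max 0 (min 1 (2 - 2 * a / r)) - max 0 (min 1 (2 - 2 * b / r))| ≤ 2 / r * |a - b| := by
  have h1 : |max 0 (min 1 (2 - 2 * a / r)) - max 0 (min 1 (2 - 2 * b / r))| ≤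
      |min 1 (2 - 2 * a / r) - min 1 (2 - 2 * b / r)| := by
    rw [max_comm 0 (min 1 (2 - 2 * a / r)), max_comm 0 (min 1 (2 - 2 * b / r))]
    exact abs_max_sub_max_le_abs _ _ _
  have h2 : |min 1 (2 - 2 * a / r) - min 1 (2 - 2 * b / r)| ≤
      |(2 - 2 * a / r) - (2 - 2 * b / r)| := by
    have := abs_min_sub_min_le_max (1:ℝ) (2 - 2 * a / r) 1 (2 - 2 * b / r)
    simpa using this
  have h3 : |(2 - 2 * a / r) - (2 - 2 * b / r)| = 2 / r * |a - b| := by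
    have : (2 - 2 * a / r) - (2 - 2 * b / r) = 2 / r * (b - a) := by field_simp; ring
    rw [this, abs_mul, abs_of_pos (by positivity : (0:ℝ) < 2 / r), abs_sub_comm]
  linarith

lemma clampMem (u : ℝ) : 0 ≤ max 0 (min 1 u) ∧ max 0 (min 1 u) ≤ 1 :=
  ⟨le_max_left _ _, max_le (by norm_num) (min_le_left _ _)⟩

lemma cutoffHolder (r β : ℝ) (hr : 0 < r) (hβ0 : 0 < β) (hβ1 : β ≤ 1)
    (x y y' : M) :
    |max 0 (min 1 (2 - 2 * dist x y / r)) - max 0 (min 1 (2 - 2 * dist x y' / r))| ≤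
      2 / r ^ β * dist y y' ^ β := by
  set d := dist y y' with hd
  have hd0 : 0 ≤ d := dist_nonneg
  rcases eq_or_lt_of_le hd0 with h0 | hdpos
  · have : y = y' := by rwa [← dist_eq_zero, ← hd, eq_comm]
    simp only [this]
    simp only [sub_self, abs_zero]
    positivity
  rcases le_or_gt d r with hdr | hdr
  · have hlip : |max 0 (min 1 (2 - 2 * dist x y / r)) - max 0 (min 1 (2 - 2 * dist x y' / r))| ≤
        2 / r * d := by
      have := clampLip r hr (dist x y) (dist x y')
      have habs : |dist x y - dist x y'| ≤ d := by
        have := abs_dist_sub_le y y' x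
        simpa [dist_comm, hd] using this
      nlinarith [abs_nonneg (dist x y - dist x y'), (by positivity : (0:ℝ) < 2 / r)]
    have key : 2 / r * d ≤ 2 / r ^ β * d ^ β := by
      have h1 : (d / r) ^ (1:ℝ) ≤ (d / r) ^ β :=
        Real.rpow_le_rpow_of_exponent_ge (div_pos hdpos hr) ((div_le_one hr).mpr hdr) hβ1
      rw [Real.rpow_one, Real.div_rpow hd0 hr.le] at h1
      have hrb : (0:ℝ) < r ^ β := Real.rpow_pos_of_pos hr β
      rw [div_le_div_iff₀ hr hrb] at h1
      rw [div_mul_eq_mul_div, div_mul_eq_mul_div, div_le_div_iff₀ hr hrb]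
      nlinarith
    linarith
  · have h1 : |max 0 (min 1 (2 - 2 * dist x y / r)) - max 0 (min 1 (2 - 2 * dist x y' / r))| ≤ 1 := by
      have a1 := clampMem (2 - 2 * dist x y / r)
      have a2 := clampMem (2 - 2 * dist x y' / r)
      rw [abs_sub_le_iff]; constructor <;> linarith
    have h2 : r ^ β ≤ d ^ β := Real.rpow_le_rpow hr.le hdr.le hβ0.le
    have hrb : (0:ℝ) < r ^ β := Real.rpow_pos_of_pos hr β
    calc |max 0 (min 1 (2 - 2 * dist x y / r)) - max 0 (min 1 (2 - 2 * dist x y' / r))| ≤ 1 := h1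
      _ ≤ 2 / r ^ β * r ^ β := by rw [div_mul_cancel₀ _ hrb.ne']; norm_num
      _ ≤ 2 / r ^ β * d ^ β := by
          apply mul_le_mul_of_nonneg_left h2 (by positivity)

lemma globalAhlfors (X Y : Set M) (ν : Measure M) (υ : ℝ) (hυ : 0 < υ)
    (hYfin : ν Y < ⊤) (hreg : UpperAhlforsRegular ν X Y υ) :
    ∃ c' : ℝ, 0 < c' ∧ ∀ x ∈ X, ∀ r : ℝ, 0 < r → r < 1 →
      (ν (ball x r ∩ Y)).toReal ≤ c' * r ^ υ := by
  obtain ⟨c, hc, r₀, hr₀, hA⟩ := hreg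
  obtain ⟨b, hb0, hb1, hbr₀⟩ : ∃ b : ℝ, 0 < b ∧ b ≤ 1 ∧ ENNReal.ofReal b < r₀ := by
    rcases eq_or_ne r₀ ⊤ with h | h
    · exact ⟨1, one_pos, le_refl 1, h ▸ ENNReal.ofReal_lt_top⟩
    · have ht : 0 < r₀.toReal := ENNReal.toReal_pos hr₀.ne' h
      refine ⟨min 1 (r₀.toReal / 2), by positivity, min_le_left _ _, ?_⟩
      calc ENNReal.ofReal (min 1 (r₀.toReal / 2)) ≤ ENNReal.ofReal (r₀.toReal / 2) :=
            ENNReal.ofReal_le_ofReal (min_le_right _ _)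
        _ < ENNReal.ofReal r₀.toReal := by
            rw [ENNReal.ofReal_lt_ofReal_iff ht]; linarith
        _ = r₀ := ENNReal.ofReal_toReal h
  have hbυ : (0:ℝ) < b ^ υ := Real.rpow_pos_of_pos hb0 υ
  refine ⟨max c ((ν Y).toReal / b ^ υ) + 1, by positivity, ?_⟩
  intro x hx r hr hr1
  have hrυ : (0:ℝ) < r ^ υ := Real.rpow_pos_of_pos hr υ
  have hfin : ν (ball x r ∩ Y) < ⊤ := lt_of_le_of_lt (measure_mono inter_subset_right) hYfin
  rcases lt_or_ge r b with hrb | hrb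
  · have := hA x hx r hr (lt_trans ((ENNReal.ofReal_lt_ofReal_iff hb0).mpr hrb) hbr₀)
    have h2 : (ν (ball x r ∩ Y)).toReal ≤ c * r ^ υ :=
      ENNReal.toReal_le_of_le_ofReal (by positivity) this
    calc (ν (ball x r ∩ Y)).toReal ≤ c * r ^ υ := h2
      _ ≤ (max c ((ν Y).toReal / b ^ υ) + 1) * r ^ υ := by
          apply mul_le_mul_of_nonneg_right _ hrυ.le
          have := le_max_left c ((ν Y).toReal / b ^ υ); linarith
  · have h2 : (ν (ball x r ∩ Y)).toReal ≤ (ν Y).toReal :=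
      ENNReal.toReal_mono hYfin.ne (measure_mono inter_subset_right)
    have h3 : b ^ υ ≤ r ^ υ := Real.rpow_le_rpow hb0.le hrb hυ.le
    have h4 : (ν Y).toReal ≤ ((ν Y).toReal / b ^ υ) * r ^ υ := by
      rw [div_mul_eq_mul_div, le_div_iff₀ hbυ]
      exact mul_le_mul_of_nonneg_left h3 ENNReal.toReal_nonneg
    calc (ν (ball x r ∩ Y)).toReal ≤ ((ν Y).toReal / b ^ υ) * r ^ υ := le_trans h2 h4
      _ ≤ (max c ((ν Y).toReal / b ^ υ) + 1) * r ^ υ := by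
          apply mul_le_mul_of_nonneg_right _ hrυ.le
          have := le_max_right c ((ν Y).toReal / b ^ υ); linarith

theorem stmt_4 {M : Type*} [MetricSpace M] [MeasurableSpace M] [BorelSpace M]
    (X Y : Set M) (ν : Measure M) (hYm : MeasurableSet Y)
    (υ β s₂ s₃ : ℝ)
    (hυ : 0 < υ) (hβ0 : 0 < β) (hβ1 : β ≤ 1) (hs₂ : β ≤ s₂) (hs₃0 : 0 < s₃) (hs₃1 : s₃ ≤ 1)
    (hball : ∀ x ∈ X, ∀ r : ℝ, 0 < r → ν (ball x r ∩ Y) < ⊤)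
    (hYfin : ν Y < ⊤)
    (ha : ∃ a : ℝ, 0 < a ∧ ∀ ρ : ℝ, 0 < ρ → ρ < a → ∀ x' ∈ X, ∃ x'' ∈ X, dist x' x'' = ρ)
    (h1 : υ < s₂ - β) (h2 : s₂ < υ + β + s₃)
    (hreg : UpperAhlforsRegular ν X Y υ)
    (Z : M → M → ℂ) (hZ : MemK X Y υ s₂ s₃ Z)
    (hQ : ∃ C : ℝ, 0 < C ∧ ∀ g : M → ℂ, IsHolderOn (X ∪ Y) β g →
      BoundedOnSet X (Qop ν Y Z g) ∧
      IsHolderOn X (min β (υ + s₃ + β - s₂)) (Qop ν Y Z g) ∧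
      supNormOn X (Qop ν Y Z g) + holderSemi X (min β (υ + s₃ + β - s₂)) (Qop ν Y Z g) ≤
        C * holderSemi (X ∪ Y) β g) :
    BddAbove {t : ℝ | ∃ x ∈ X, ∃ r : ℝ, 0 < r ∧ r < Real.exp (-1 / s₃) ∧
      t = ‖∫ y in Y \ ball x r, Z x y ∂ν‖ * r ^ β /
        max (r ^ β) (r ^ (υ + s₃ + β - s₂))} := by
  classical
  obtain ⟨a, ha0, haX⟩ := ha
  obtain ⟨C, hC0, hQ⟩ := hQ
  obtain ⟨c', hc'0, hA⟩ := globalAhlfors X Y ν υ hυ hYfin hreg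
  obtain ⟨hZc, hZ1, hZ2⟩ := hZ
  set s' : ℝ := υ + s₃ + β - s₂ with hs'
  have hs'0 : 0 < s' := by rw [hs']; linarith
  set m : ℝ := min β s' with hm
  have hm0 : 0 < m := lt_min hβ0 hs'0
  have hmβ : m ≤ β := min_le_left _ _
  have hm1 : m ≤ 1 := hmβ.trans hβ1
  set N : ℝ := max (sSup (kernelSet₁ X Y υ Z)) 0 with hN
  have hN0 : 0 ≤ N := le_max_right _ _
  have hZbd : ∀ x ∈ X, ∀ y ∈ Y, ∀ ρ : ℝ, 0 < ρ → ρ ≤ dist x y → ‖Z x y‖ ≤ N / ρ ^ υ := by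
    intro x hx y hy ρ hρ hρd
    have hd0 : 0 < dist x y := lt_of_lt_of_le hρ hρd
    have hxy : x ≠ y := by
      intro h; rw [h, dist_self] at hd0; exact lt_irrefl _ hd0
    have hmem : dist x y ^ υ * ‖Z x y‖ ∈ kernelSet₁ X Y υ Z := ⟨x, hx, y, hy, hxy, rfl⟩
    have h1 : dist x y ^ υ * ‖Z x y‖ ≤ N := le_trans (le_csSup hZ1 hmem) (le_max_left _ _)
    have hdυ : (0:ℝ) < dist x y ^ υ := Real.rpow_pos_of_pos hd0 υ
    have hρυ : (0:ℝ) < ρ ^ υ := Real.rpow_pos_of_pos hρ υ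
    have hle : ρ ^ υ ≤ dist x y ^ υ := Real.rpow_le_rpow hρ.le hρd hυ.le
    have h2 : ‖Z x y‖ ≤ N / dist x y ^ υ := by
      rw [le_div_iff₀ hdυ]; nlinarith
    exact h2.trans (by gcongr)
  set δ : ℝ := a / 4 with hδ
  have hδ0 : (0:ℝ) < δ := by positivity
  have hδυ : (0:ℝ) < δ ^ υ := Real.rpow_pos_of_pos hδ0 υ
  refine ⟨4 * C + N * c' * (1 + 2 ^ υ) + N / δ ^ υ * (ν Y).toReal, ?_⟩
  rintro t ⟨x, hx, r, hr0, hrE, rfl⟩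
  have hr1 : r < 1 := by
    refine hrE.trans_le (le_of_lt ?_)
    have : (-1:ℝ) / s₃ < 0 := div_neg_of_neg_of_pos (by norm_num) hs₃0
    simpa using Real.exp_lt_one_iff.mpr this
  have hrβ : (0:ℝ) < r ^ β := Real.rpow_pos_of_pos hr0 β
  have hrm : (0:ℝ) < r ^ m := Real.rpow_pos_of_pos hr0 m
  have hrs' : (0:ℝ) < r ^ s' := Real.rpow_pos_of_pos hr0 s'
  have hrυ : (0:ℝ) < r ^ υ := Real.rpow_pos_of_pos hr0 υ
  have hmax : r ^ m ≤ max (r ^ β) (r ^ s') := by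
    rcases le_total β s' with h | h
    · rw [hm, min_eq_left h]; exact le_max_left _ _
    · rw [hm, min_eq_right h]; exact le_max_right _ _
  have hmaxpos : (0:ℝ) < max (r ^ β) (r ^ s') := lt_of_lt_of_le hrβ (le_max_left _ _)
  set I : ℂ := ∫ y in Y \ ball x r, Z x y ∂ν with hI
  have hstep0 : ‖I‖ * r ^ β / max (r ^ β) (r ^ s') ≤ ‖I‖ * r ^ β / r ^ m := by
    gcongr
  rcases le_or_gt δ r with hδr | hrδ
  · -- large radius: crude bound
    have hbd : ∀ y ∈ Y \ ball x r, ‖Z x y‖ ≤ N / δ ^ υ := by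
      intro y hy
      have hdy : r ≤ dist x y := by
        have := hy.2; rw [mem_ball, dist_comm] at this; linarith [not_lt.mp this]
      exact hZbd x hx y hy.1 δ hδ0 (hδr.trans hdy)
    have hS : MeasurableSet (Y \ ball x r) := hYm.diff measurableSet_ball
    have hfin : ν (Y \ ball x r) < ⊤ := lt_of_le_of_lt (measure_mono diff_subset) hYfin
    have hSx : ∀ y ∈ Y \ ball x r, x ≠ y := by
      intro y hy h
      have := hy.2; rw [mem_ball, ← h, dist_self] at this; exact this hr0
    have hint : IntegrableOn (fun y => Z x y) (Y \ ball x r) ν :=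
      sliceIntegrableOn X Y ν hYfin Z hZc x hx _ hS diff_subset hSx (N / δ ^ υ) hbd
    have hIbd : ‖I‖ ≤ N / δ ^ υ * (ν (Y \ ball x r)).toReal :=
      norm_setIntegral_le_of_norm_le_const hfin hbd
    have hIbd2 : ‖I‖ ≤ N / δ ^ υ * (ν Y).toReal := by
      refine hIbd.trans (mul_le_mul_of_nonneg_left ?_ (by positivity))
      exact ENNReal.toReal_mono hYfin.ne (measure_mono diff_subset)
    have ht1 : ‖I‖ * r ^ β / max (r ^ β) (r ^ s') ≤ ‖I‖ := by
      rw [div_le_iff₀ hmaxpos]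
      exact mul_le_mul_of_nonneg_left (le_max_left _ _) (norm_nonneg _)
    have hpos1 : 0 ≤ N * c' * (1 + 2 ^ υ) := by positivity
    linarith
  · -- small radius: main estimate
    obtain ⟨x'', hx'', hdist⟩ := haX (2 * r) (by linarith) (by rw [hδ] at hrδ; linarith) x hx
    have hxx : x ≠ x'' := by
      intro h; rw [h, dist_self] at hdist; linarith
    set gr : M → ℝ := fun y => max 0 (min 1 (2 - 2 * dist x y / r)) with hgr
    set g : M → ℂ := fun y => ((gr y : ℝ) : ℂ) with hg
    have hg01 : ∀ y, 0 ≤ gr y ∧ gr y ≤ 1 := fun y => clampMem _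
    have hgx : gr x = 1 := by
      rw [hgr]; simp only [dist_self]; norm_num
    have hgout : ∀ y, r ≤ dist x y → gr y = 0 := by
      intro y hy
      have h2 : 2 - 2 * dist x y / r ≤ 0 := by
        rw [sub_nonpos, le_div_iff₀ hr0]; linarith
      rw [hgr]
      exact max_eq_left (le_trans (min_le_right _ _) h2)
    have hgin : ∀ y, dist x y ≤ r / 2 → gr y = 1 := by
      intro y hy
      have h2 : (1:ℝ) ≤ 2 - 2 * dist x y / r := by
        rw [le_sub_iff_add_le, ← le_sub_iff_add_le', div_le_iff₀ hr0]
        · linarith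
      rw [hgr]
      simp only []
      rw [min_eq_left h2, max_eq_right zero_le_one]
    have hgx'' : gr x'' = 0 := hgout x'' (by rw [hdist]; linarith)
    have hgd : ∀ y y' : M, ‖g y - g y'‖ = |gr y - gr y'| := by
      intro y y'
      rw [hg]
      rw [show ((gr y : ℝ):ℂ) - ((gr y' : ℝ):ℂ) = (((gr y - gr y' : ℝ)):ℂ) by push_cast; ring]
      rw [Complex.norm_real, Real.norm_eq_abs]
    have hgd1 : ∀ y y' : M, ‖g y - g y'‖ ≤ 1 := by
      intro y y'
      rw [hgd]
      have a1 := hg01 y; have a2 := hg01 y'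
      rw [abs_sub_le_iff]; constructor <;> linarith
    have hquot : ∀ p ∈ holderSet (X ∪ Y) β g, p ≤ 2 / r ^ β := by
      rintro p ⟨y, hy, y', hy', hne, rfl⟩
      have hd0 : (0:ℝ) < dist y y' := dist_pos.mpr hne
      have hdβ : (0:ℝ) < dist y y' ^ β := Real.rpow_pos_of_pos hd0 β
      rw [div_le_iff₀ hdβ, hgd]
      exact cutoffHolder r β hr0 hβ0 hβ1 x y y'
    have hgHol : IsHolderOn (X ∪ Y) β g := ⟨2 / r ^ β, fun p hp => hquot p hp⟩
    have hsemig : holderSemi (X ∪ Y) β g ≤ 2 / r ^ β :=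
      Real.sSup_le hquot (by positivity)
    obtain ⟨hBdd, hHol, hsum⟩ := hQ g hgHol
    set Q : M → ℂ := Qop ν Y Z g with hQdef
    have hsup0 : 0 ≤ supNormOn X Q := le_trans (norm_nonneg (Q x)) (le_csSup hBdd ⟨x, hx, rfl⟩)
    have hquotQmem : ‖Q x - Q x''‖ / dist x x'' ^ m ∈ holderSet X m Q := ⟨x, hx, x'', hx'', hxx, rfl⟩
    have hsemi0 : 0 ≤ holderSemi X m Q :=
      le_trans (by positivity) (le_csSup hHol hquotQmem)
    have hCg : C * holderSemi (X ∪ Y) β g ≤ C * (2 / r ^ β) :=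
      mul_le_mul_of_nonneg_left hsemig hC0.le
    have hQsup : supNormOn X Q ≤ C * (2 / r ^ β) := by linarith
    have hQsemi : holderSemi X m Q ≤ C * (2 / r ^ β) := by linarith
    have h2rm : (0:ℝ) < (2 * r) ^ m := Real.rpow_pos_of_pos (by linarith) m
    have hQdiff : ‖Q x - Q x''‖ ≤ C * (2 / r ^ β) * (2 * r) ^ m := by
      have h := le_csSup hHol hquotQmem
      rw [hdist, div_le_iff₀ h2rm] at h
      exact h.trans (mul_le_mul_of_nonneg_right hQsemi h2rm.le)
    -- bound on ‖Q x''‖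
    have hmeasYB : MeasurableSet (Y ∩ ball x r) := hYm.inter measurableSet_ball
    have hνYB : (ν (Y ∩ ball x r)).toReal ≤ c' * r ^ υ := by
      rw [inter_comm]; exact hA x hx r hr0 hr1
    have hνYBfin : ν (Y ∩ ball x r) < ⊤ := lt_of_le_of_lt (measure_mono inter_subset_left) hYfin
    have hdistx'' : ∀ y ∈ ball x r, r ≤ dist x'' y := by
      intro y hy
      rw [mem_ball] at hy
      have h3 := dist_triangle x'' y x
      have h4 : dist x'' x = 2 * r := by rw [dist_comm]; exact hdist
      linarith
    have hZint'' : IntegrableOn (fun y => Z x'' y) (Y ∩ ball x r) ν := by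
      refine sliceIntegrableOn X Y ν hYfin Z hZc x'' hx'' _ hmeasYB inter_subset_left ?_ (N / r ^ υ) ?_
      · intro y hy h
        have := hdistx'' y hy.2
        rw [← h, dist_self] at this; linarith
      · intro y hy
        exact hZbd x'' hx'' y hy.1 r hr0 (hdistx'' y hy.2)
    have hgrcont : Continuous fun y => g x'' - g y := by
      rw [hg, hgr]; fun_prop
    have hwbd'' : ∀ y, ‖g x'' - g y‖ ≤ 1 := fun y => hgd1 x'' y
    have hInt1'' : IntegrableOn (fun y => Z x'' y * (g x'' - g y)) (Y ∩ ball x r) ν := by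
      have h0 : IntegrableOn (fun y => (g x'' - g y) * Z x'' y) (Y ∩ ball x r) ν :=
        hZint''.bdd_mul (hgrcont.aestronglyMeasurable) (Filter.Eventually.of_forall hwbd'')
      exact h0.congr_fun (fun y _ => mul_comm _ _) hmeasYB
    have hzeroOut'' : ∀ y ∈ Y \ ball x r, Z x'' y * (g x'' - g y) = 0 := by
      intro y hy
      have h1 : gr y = 0 := hgout y (by
        have := hy.2; rw [mem_ball, dist_comm] at this; exact not_lt.mp this)
      rw [hg]; simp only []
      rw [hgx'', h1]; simp
    have hInt0'' : IntegrableOn (fun y => Z x'' y * (g x'' - g y)) (Y \ ball x r) ν := by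
      refine (integrableOn_zero (μ := ν) (s := Y \ ball x r)).congr_fun ?_ (hYm.diff measurableSet_ball)
      intro y hy; exact (hzeroOut'' y hy).symm
    have hIntY'' : IntegrableOn (fun y => Z x'' y * (g x'' - g y)) Y ν := by
      have := hInt1''.union hInt0''
      rwa [inter_union_diff] at this
    have hQx''eq : Q x'' = ∫ y in Y ∩ ball x r, Z x'' y * (g x'' - g y) ∂ν := by
      rw [hQdef]
      show (∫ y in Y, Z x'' y * (g x'' - g y) ∂ν) = _
      rw [← integral_inter_add_diff measurableSet_ball hIntY'']
      rw [setIntegral_eq_zero_of_forall_eq_zero hzeroOut'']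
      ring
    have hQx'' : ‖Q x''‖ ≤ N * c' := by
      rw [hQx''eq]
      have hbd : ∀ y ∈ Y ∩ ball x r, ‖Z x'' y * (g x'' - g y)‖ ≤ N / r ^ υ := by
        intro y hy
        rw [norm_mul]
        calc ‖Z x'' y‖ * ‖g x'' - g y‖ ≤ (N / r ^ υ) * 1 := by
              apply mul_le_mul (hZbd x'' hx'' y hy.1 r hr0 (hdistx'' y hy.2)) (hwbd'' y)
                (norm_nonneg _) (by positivity)
          _ = N / r ^ υ := mul_one _
      calc ‖∫ y in Y ∩ ball x r, Z x'' y * (g x'' - g y) ∂ν‖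
          ≤ (N / r ^ υ) * (ν (Y ∩ ball x r)).toReal :=
            norm_setIntegral_le_of_norm_le_const hνYBfin hbd
        _ ≤ (N / r ^ υ) * (c' * r ^ υ) :=
            mul_le_mul_of_nonneg_left hνYB (by positivity)
        _ = N * c' := by
            have hne : r ^ υ ≠ 0 := hrυ.ne'
            field_simp
    -- decomposition at x
    have hr20 : (0:ℝ) < r / 2 := by linarith
    have hmeasOut : MeasurableSet (Y \ ball x (r / 2)) := hYm.diff measurableSet_ball
    have hdhalf : ∀ y ∈ Y \ ball x (r / 2), r / 2 ≤ dist x y := by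
      intro y hy
      have := hy.2; rw [mem_ball, dist_comm] at this; exact not_lt.mp this
    have hZintOut : IntegrableOn (fun y => Z x y) (Y \ ball x (r / 2)) ν := by
      refine sliceIntegrableOn X Y ν hYfin Z hZc x hx _ hmeasOut diff_subset ?_ (N / (r / 2) ^ υ) ?_
      · intro y hy h
        have := hdhalf y hy; rw [← h, dist_self] at this; linarith
      · intro y hy
        exact hZbd x hx y hy.1 (r / 2) hr20 (hdhalf y hy)
    have hgxcont : Continuous fun y => g x - g y := by
      rw [hg, hgr]; fun_prop
    have hwbdx : ∀ y, ‖g x - g y‖ ≤ 1 := fun y => hgd1 x y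
    have hIntFOut : IntegrableOn (fun y => Z x y * (g x - g y)) (Y \ ball x (r / 2)) ν := by
      have h0 : IntegrableOn (fun y => (g x - g y) * Z x y) (Y \ ball x (r / 2)) ν :=
        hZintOut.bdd_mul (hgxcont.aestronglyMeasurable) (Filter.Eventually.of_forall hwbdx)
      exact h0.congr_fun (fun y _ => mul_comm _ _) hmeasOut
    have hzeroIn : ∀ y ∈ Y ∩ ball x (r / 2), Z x y * (g x - g y) = 0 := by
      intro y hy
      have h1 : gr y = 1 := hgin y (by
        have := hy.2; rw [mem_ball, dist_comm] at this; linarith)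
      rw [hg]; simp only []
      rw [hgx, h1]; simp
    have hIntFIn : IntegrableOn (fun y => Z x y * (g x - g y)) (Y ∩ ball x (r / 2)) ν := by
      refine (integrableOn_zero (μ := ν) (s := Y ∩ ball x (r / 2))).congr_fun ?_
        (hYm.inter measurableSet_ball)
      intro y hy; exact (hzeroIn y hy).symm
    have hIntFY : IntegrableOn (fun y => Z x y * (g x - g y)) Y ν := by
      have := hIntFIn.union hIntFOut
      rwa [inter_union_diff] at this
    have hdiffeq : (Y \ ball x (r / 2)) \ ball x r = Y \ ball x r := by
      rw [diff_diff, union_eq_right.mpr (ball_subset_ball (by linarith))]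
    have hFonFar : ∀ y ∈ Y \ ball x r, Z x y * (g x - g y) = Z x y := by
      intro y hy
      have h1 : gr y = 0 := hgout y (by
        have := hy.2; rw [mem_ball, dist_comm] at this; exact not_lt.mp this)
      rw [hg]; simp only []
      rw [hgx, h1]; simp
    set E : ℂ := ∫ y in (Y \ ball x (r / 2)) ∩ ball x r, Z x y * (g x - g y) ∂ν with hE
    have hsplit : Q x = E + I := by
      rw [hQdef]
      show (∫ y in Y, Z x y * (g x - g y) ∂ν) = E + I
      rw [← integral_inter_add_diff measurableSet_ball hIntFY]  -- ball x (r/2)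
      rw [setIntegral_eq_zero_of_forall_eq_zero hzeroIn, zero_add]
      rw [← integral_inter_add_diff measurableSet_ball (hIntFY.mono_set diff_subset)]
      rw [hdiffeq, hI, hE]
      congr 1
      exact setIntegral_congr_fun (hYm.diff measurableSet_ball) hFonFar
    have hEsub : (Y \ ball x (r / 2)) ∩ ball x r ⊆ Y ∩ ball x r := fun y hy => ⟨hy.1.1, hy.2⟩
    have hEfin : ν ((Y \ ball x (r / 2)) ∩ ball x r) < ⊤ :=
      lt_of_le_of_lt (measure_mono hEsub) hνYBfin
    have hEbd : ‖E‖ ≤ N * c' * 2 ^ υ := by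
      have hbd : ∀ y ∈ (Y \ ball x (r / 2)) ∩ ball x r, ‖Z x y * (g x - g y)‖ ≤ N / (r / 2) ^ υ := by
        intro y hy
        rw [norm_mul]
        calc ‖Z x y‖ * ‖g x - g y‖ ≤ (N / (r / 2) ^ υ) * 1 := by
              apply mul_le_mul (hZbd x hx y hy.1.1 (r / 2) hr20 (hdhalf y hy.1)) (hwbdx y)
                (norm_nonneg _) (by positivity)
          _ = N / (r / 2) ^ υ := mul_one _
      have hmes : (ν ((Y \ ball x (r / 2)) ∩ ball x r)).toReal ≤ c' * r ^ υ := by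
        refine le_trans (ENNReal.toReal_mono hνYBfin.ne (measure_mono hEsub)) hνYB
      calc ‖E‖ ≤ (N / (r / 2) ^ υ) * (ν ((Y \ ball x (r / 2)) ∩ ball x r)).toReal := by
            rw [hE]
            exact norm_setIntegral_le_of_norm_le_const hEfin hbd
        _ ≤ (N / (r / 2) ^ υ) * (c' * r ^ υ) :=
            mul_le_mul_of_nonneg_left hmes (by positivity)
        _ = N * c' * 2 ^ υ := by
            rw [Real.div_rpow hr0.le (by norm_num : (0:ℝ) ≤ 2)]
            have h2υ : (0:ℝ) < (2:ℝ) ^ υ := Real.rpow_pos_of_pos (by norm_num) υ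
            have hne : r ^ υ ≠ 0 := hrυ.ne'
            have hne2 : (2:ℝ) ^ υ ≠ 0 := h2υ.ne'
            field_simp
    have hIeq : I = Q x - E := by rw [hsplit]; ring
    have hIbd : ‖I‖ ≤ C * (2 / r ^ β) * (2 * r) ^ m + N * c' + N * c' * 2 ^ υ := by
      rw [hIeq]
      calc ‖Q x - E‖ ≤ ‖Q x‖ + ‖E‖ := norm_sub_le _ _
        _ ≤ (‖Q x - Q x''‖ + ‖Q x''‖) + ‖E‖ := by
            have h := norm_add_le (Q x - Q x'') (Q x'')
            rw [sub_add_cancel] at h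
            linarith
        _ ≤ C * (2 / r ^ β) * (2 * r) ^ m + N * c' + N * c' * 2 ^ υ := by
            linarith
    -- final numeric computation
    have h2m : (2:ℝ) ^ m ≤ 2 := by
      have := Real.rpow_le_rpow_of_exponent_le (by norm_num : (1:ℝ) ≤ 2) hm1
      rwa [Real.rpow_one] at this
    have h2rmeq : (2 * r) ^ m = 2 ^ m * r ^ m :=
      Real.mul_rpow (by norm_num) hr0.le
    have hterm1 : C * (2 / r ^ β) * (2 * r) ^ m ≤ 4 * C * r ^ m / r ^ β := by
      rw [h2rmeq]
      have heq : C * (2 / r ^ β) * (2 ^ m * r ^ m) = 2 ^ m * (2 * C * r ^ m / r ^ β) := by ring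
      have heq2 : 4 * C * r ^ m / r ^ β = 2 * (2 * C * r ^ m / r ^ β) := by ring
      rw [heq, heq2]
      exact mul_le_mul_of_nonneg_right h2m (by positivity)
    have hrβm : r ^ β ≤ r ^ m := Real.rpow_le_rpow_of_exponent_ge hr0 hr1.le hmβ
    have hKnn : 0 ≤ N * c' * (1 + 2 ^ υ) := by positivity
    have hfinal : ‖I‖ * r ^ β / r ^ m ≤ 4 * C + N * c' * (1 + 2 ^ υ) := by
      have hIbd2 : ‖I‖ ≤ 4 * C * r ^ m / r ^ β + N * c' * (1 + 2 ^ υ) := by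
        have : N * c' + N * c' * 2 ^ υ = N * c' * (1 + 2 ^ υ) := by ring
        linarith
      have hq1 : r ^ β / r ^ m ≤ 1 := by rw [div_le_one hrm]; exact hrβm
      calc ‖I‖ * r ^ β / r ^ m ≤ (4 * C * r ^ m / r ^ β + N * c' * (1 + 2 ^ υ)) * r ^ β / r ^ m := by
            gcongr
        _ = 4 * C + N * c' * (1 + 2 ^ υ) * (r ^ β / r ^ m) := by
            have hne : r ^ β ≠ 0 := hrβ.ne'
            have hne2 : r ^ m ≠ 0 := hrm.ne'
            field_simp
        _ ≤ 4 * C + N * c' * (1 + 2 ^ υ) * 1 :=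
            (add_le_add_iff_left _).mpr (mul_le_mul_of_nonneg_left hq1 hKnn)
        _ = 4 * C + N * c' * (1 + 2 ^ υ) := by ring
    have hpos3 : 0 ≤ N / δ ^ υ * (ν Y).toReal := by positivity
    linarith
end
end

section
/- Let (M,d) be a metric space and X, Y ⊆ M. Assume there exists a ∈ (0,∞) such that for each ρ ∈ (0,a) and each x' ∈ X there exists x'' ∈ X with d(x',x'') = ρ. Let υ_Y ∈ (0,∞), β ∈ (0,1], s₂ ∈ [β,∞), s₃ ∈ (0,1], with s₂ − β > υ_Y, s₂ < υ_Y + β + s₃, and in addition s₂ ≤ υ_Y + s₃. Let ν be a measure on a σ-algebra of subsets of Y containing the Borel subsets of Y, with ν(B(x,r) ∩ Y) < ∞ for all x ∈ X and r > 0, and ν(Y) < ∞. Let Y be upper υ_Y-Ahlfors regular with respect to X and let Z ∈ 𝒦_{υ_Y,s₂,s₃}(X×Y). If there exists C > 0 such that for every g ∈ C^{0,β}(X∪Y) the function Q[Z,g,1] is bounded and β-Hölder continuous on X with sup-norm plus Hölder seminorm at most C·|g|_β, then sup_{x∈X} sup_{r>0} |∫_{Y\B(x,r)} Z(x,y) dν(y)|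 < ∞. -/
open MeasureTheory Metric Set
open scoped ENNReal

noncomputable section

variable {M : Type*} [MetricSpace M] [MeasurableSpace M] [BorelSpace M]

open scoped NNReal in
theorem aux_trunc_lip (r u v : ℝ) :
    |min (max (u - r) 0) r - min (max (v - r) 0) r| ≤ |u - v| := by
  have h5 : u - v ≤ |u - v| := le_abs_self _
  have h6 : v - u ≤ |u - v| := by rw [abs_sub_comm]; exact le_abs_self _
  rw [abs_le]
  constructor <;> simp only [min_def, max_def] <;> split_ifs <;> linarith

open scoped NNReal in
theorem aux_rpow_subadd {β : ℝ} (hβ0 : 0 < β) (hβ1 : β ≤ 1) {a b : ℝ} (ha : 0 ≤ a) (hb : 0 ≤ b) :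
    (a + b) ^ β ≤ a ^ β + b ^ β := by
  have h := NNReal.rpow_add_le_add_rpow a.toNNReal b.toNNReal hβ0.le hβ1
  have h1 : ((a.toNNReal + b.toNNReal : ℝ≥0) : ℝ) = a + b := by
    simp [Real.coe_toNNReal _ ha, Real.coe_toNNReal _ hb]
  calc (a + b) ^ β = (((a.toNNReal + b.toNNReal : ℝ≥0) : ℝ)) ^ β := by rw [h1]
    _ = (((a.toNNReal + b.toNNReal) ^ β : ℝ≥0) : ℝ) := by rw [← NNReal.coe_rpow]
    _ ≤ (((a.toNNReal ^ β + b.toNNReal ^ β : ℝ≥0)) : ℝ) := by exact_mod_cast h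
    _ = a ^ β + b ^ β := by
        rw [NNReal.coe_add, NNReal.coe_rpow, NNReal.coe_rpow,
          Real.coe_toNNReal _ ha, Real.coe_toNNReal _ hb]

theorem aux_rpow_diff {β : ℝ} (hβ0 : 0 < β) (hβ1 : β ≤ 1) {u v : ℝ} (hu : 0 ≤ u) (hv : 0 ≤ v) :
    |u ^ β - v ^ β| ≤ |u - v| ^ β := by
  have key : ∀ a b : ℝ, 0 ≤ b → b ≤ a → a ^ β - b ^ β ≤ (a - b) ^ β := by
    intro a b hb hba
    have h := aux_rpow_subadd hβ0 hβ1 (sub_nonneg.2 hba) hb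
    rw [sub_add_cancel] at h
    linarith
  rcases le_total v u with h | h
  · rw [abs_of_nonneg (sub_nonneg.2 (Real.rpow_le_rpow hv h hβ0.le)),
      abs_of_nonneg (sub_nonneg.2 h)]
    exact key u v hv h
  · rw [abs_sub_comm, abs_sub_comm u v,
      abs_of_nonneg (sub_nonneg.2 (Real.rpow_le_rpow hu h hβ0.le)),
      abs_of_nonneg (sub_nonneg.2 h)]
    exact key v u hu h

theorem aux_aesm {M : Type*} [MetricSpace M] [MeasurableSpace M] [BorelSpace M]
    (ν : Measure M) {Y S : Set M} (hY : MeasurableSet Y) (hS : MeasurableSet S)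
    {f : M → ℂ} (hc : ContinuousOn f (Y ∩ S)) (hz : ∀ y ∈ Y \ S, f y = 0) :
    AEStronglyMeasurable f (ν.restrict Y) := by
  have hun : Y = (Y ∩ S) ∪ (Y \ S) := (Set.inter_union_diff Y S).symm
  rw [hun, aestronglyMeasurable_union_iff]
  refine ⟨hc.aestronglyMeasurable (hY.inter hS), ?_⟩
  refine (aestronglyMeasurable_const (b := (0:ℂ))).congr ?_
  exact (ae_restrict_iff' (hY.diff hS)).2 (Filter.Eventually.of_forall fun y hy => (hz y hy).symm)

theorem stmt_5 {M : Type*} [MetricSpace M] [MeasurableSpace M] [BorelSpace M]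
    (X Y : Set M) (ν : Measure M) (hYm : MeasurableSet Y)
    (υ β s₂ s₃ : ℝ)
    (hυ : 0 < υ) (hβ0 : 0 < β) (hβ1 : β ≤ 1) (hs₂ : β ≤ s₂) (hs₃0 : 0 < s₃) (hs₃1 : s₃ ≤ 1)
    (hball : ∀ x ∈ X, ∀ r : ℝ, 0 < r → ν (ball x r ∩ Y) < ⊤)
    (hYfin : ν Y < ⊤)
    (ha : ∃ a : ℝ, 0 < a ∧ ∀ ρ : ℝ, 0 < ρ → ρ < a → ∀ x' ∈ X, ∃ x'' ∈ X, dist x' x'' = ρ)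
    (h1 : υ < s₂ - β) (h2 : s₂ < υ + β + s₃) (h3 : s₂ ≤ υ + s₃)
    (hreg : UpperAhlforsRegular ν X Y υ)
    (Z : M → M → ℂ) (hZ : MemK X Y υ s₂ s₃ Z)
    (hQ : ∃ C : ℝ, 0 < C ∧ ∀ g : M → ℂ, IsHolderOn (X ∪ Y) β g →
      BoundedOnSet X (Qop ν Y Z g) ∧
      IsHolderOn X β (Qop ν Y Z g) ∧
      supNormOn X (Qop ν Y Z g) + holderSemi X β (Qop ν Y Z g) ≤
        C * holderSemi (X ∪ Y) β g) :
    BddAbove (maxFunSet ν X Y Z) := by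
  obtain ⟨c, hc0, r₀, hr₀, hAhl⟩ := hreg
  obtain ⟨a, ha0, hXden⟩ := ha
  obtain ⟨C, hC0, hQb⟩ := hQ
  obtain ⟨hZcont, hZ1, hZ2⟩ := hZ
  set N := sSup (kernelSet₁ X Y υ Z) with hNdef
  have hN0 : 0 ≤ N := by
    apply Real.sSup_nonneg
    rintro t ⟨x, hx, y, hy, hxy, rfl⟩
    have h0 : (0:ℝ) ≤ dist x y := dist_nonneg
    positivity
  -- pointwise kernel bound
  have hker : ∀ x ∈ X, ∀ y ∈ Y, ∀ t : ℝ, 0 < t → t ≤ dist x y → ‖Z x y‖ ≤ N / t ^ υ := by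
    intro x hx y hy t ht htd
    have hd : (0:ℝ) < dist x y := lt_of_lt_of_le ht htd
    have hne : x ≠ y := dist_pos.mp hd
    have hle : dist x y ^ υ * ‖Z x y‖ ≤ N := le_csSup hZ1 ⟨x, hx, y, hy, hne, rfl⟩
    have hdp : (0:ℝ) < dist x y ^ υ := Real.rpow_pos_of_pos hd υ
    have htp : (0:ℝ) < t ^ υ := Real.rpow_pos_of_pos ht υ
    have h1 : ‖Z x y‖ ≤ N / dist x y ^ υ := by
      rw [le_div_iff₀ hdp]; linarith [hle, mul_comm (dist x y ^ υ) ‖Z x y‖]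
    have h2 : t ^ υ ≤ dist x y ^ υ := Real.rpow_le_rpow ht.le htd hυ.le
    refine h1.trans ?_
    gcongr
  -- a real radius below r₀
  obtain ⟨ρ₀, hρ₀nn, hρ₀1, hρ₀2⟩ := ENNReal.lt_iff_exists_real_btwn.mp hr₀
  have hρ₀pos : 0 < ρ₀ := by
    by_contra h
    push_neg at h
    rw [ENNReal.ofReal_eq_zero.2 h] at hρ₀1
    exact lt_irrefl _ hρ₀1
  set T := min (a / 4) ρ₀ with hTdef
  have hT0 : 0 < T := lt_min (by linarith) hρ₀pos
  -- Ahlfors bound, real form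
  have hAhl' : ∀ x ∈ X, ∀ r : ℝ, 0 < r → r ≤ ρ₀ → (ν (Y ∩ ball x r)).toReal ≤ c * r ^ υ := by
    intro x hx r hr hrρ
    have hlt : ENNReal.ofReal r < r₀ := lt_of_le_of_lt (ENNReal.ofReal_le_ofReal hrρ) hρ₀2
    have h := hAhl x hx r hr hlt
    rw [Set.inter_comm] at h
    calc (ν (Y ∩ ball x r)).toReal ≤ (ENNReal.ofReal (c * r ^ υ)).toReal :=
          ENNReal.toReal_mono ENNReal.ofReal_ne_top h
      _ = c * r ^ υ := ENNReal.toReal_ofReal (by positivity)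
  set B₁ : ℝ := C * 4 ^ β + c * N + 2 ^ υ * (c * N) with hB₁def
  set B₂ : ℝ := N / T ^ υ * (ν Y).toReal with hB₂def
  refine ⟨max B₁ B₂, ?_⟩
  rintro t ⟨x, hx, s, hs, rfl⟩
  -- continuity of the section
  have hZxcont : ∀ x' ∈ X, ContinuousOn (fun y => Z x' y) (Y \ {x'}) := by
    intro x' hx'
    have hmaps : Set.MapsTo (fun y => (x', y)) (Y \ {x'})
        ((X ×ˢ Y) \ {p : M × M | p.1 = p.2}) := by
      intro y hy
      refine ⟨⟨hx', hy.1⟩, ?_⟩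
      simp only [Set.mem_setOf_eq]
      intro hcontra
      exact hy.2 (by simp [hcontra.symm])
    exact hZcont.comp ((Continuous.prodMk_right x').continuousOn) hmaps
  rcases lt_or_ge s T with hsT | hsT
  case _ => -- small s : the hard case
    set r := s / 2 with hrdef
    have hr0 : 0 < r := by positivity
    have hs2r : 2 * r = s := by rw [hrdef]; ring
    have hrs : r = s / 2 := hrdef
    have hsa : 4 * r < a := by
      have h4 : T ≤ a / 4 := min_le_left _ _
      linarith
    have hsρ : 2 * r ≤ ρ₀ := by
      have h5 : T ≤ ρ₀ := min_le_right _ _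
      linarith
    set φ : M → ℝ := fun y => min (max (dist x y - r) 0) r with hφdef
    have hφ0 : ∀ y, 0 ≤ φ y := fun y => le_min (le_max_right _ _) hr0.le
    have hφr : ∀ y, φ y ≤ r := fun y => min_le_right _ _
    set g : M → ℂ := fun y => ((φ y ^ β : ℝ) : ℂ) with hgdef
    have hφx : φ x = 0 := by
      simp only [hφdef, dist_self, zero_sub]
      rw [max_eq_right (by linarith : -r ≤ 0), min_eq_left hr0.le]
    have hgx : g x = 0 := by
      simp only [hgdef, hφx, Real.zero_rpow hβ0.ne', Complex.ofReal_zero]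
    have hφfar : ∀ y, 2 * r ≤ dist x y → φ y = r := by
      intro y hy
      simp only [hφdef]
      rw [max_eq_left (by linarith), min_eq_right (by linarith)]
    have hgfar : ∀ y, 2 * r ≤ dist x y → g y = ((r ^ β : ℝ) : ℂ) := by
      intro y hy; simp only [hgdef, hφfar y hy]
    have hrβpos : (0:ℝ) < r ^ β := Real.rpow_pos_of_pos hr0 β
    have hgnorm : ∀ y, ‖g y‖ ≤ r ^ β := by
      intro y
      simp only [hgdef, Complex.norm_real, Real.norm_eq_abs,
        abs_of_nonneg (Real.rpow_nonneg (hφ0 y) β)]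
      exact Real.rpow_le_rpow (hφ0 y) (hφr y) hβ0.le
    have hgH : ∀ p q : M, ‖g p - g q‖ ≤ dist p q ^ β := by
      intro p q
      have e1 : ‖g p - g q‖ = |φ p ^ β - φ q ^ β| := by
        simp only [hgdef, ← Complex.ofReal_sub, Complex.norm_real, Real.norm_eq_abs]
      rw [e1]
      calc |φ p ^ β - φ q ^ β| ≤ |φ p - φ q| ^ β := aux_rpow_diff hβ0 hβ1 (hφ0 p) (hφ0 q)
        _ ≤ dist p q ^ β := by
            apply Real.rpow_le_rpow (abs_nonneg _) _ hβ0.le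
            calc |φ p - φ q| ≤ |dist x p - dist x q| := aux_trunc_lip r _ _
              _ ≤ dist p q := by
                  rw [dist_comm x p, dist_comm x q]; exact abs_dist_sub_le p q x
    have hgHol : IsHolderOn (X ∪ Y) β g := by
      refine ⟨1, fun t ht => ?_⟩
      obtain ⟨p, hp, q, hq, hpq, rfl⟩ := ht
      rw [div_le_one (Real.rpow_pos_of_pos (dist_pos.2 hpq) β)]
      exact hgH p q
    have hsemi_g : holderSemi (X ∪ Y) β g ≤ 1 := by
      apply Real.sSup_le _ zero_le_one
      rintro t ⟨p, hp, q, hq, hpq, rfl⟩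
      rw [div_le_one (Real.rpow_pos_of_pos (dist_pos.2 hpq) β)]
      exact hgH p q
    obtain ⟨hQbdd, hQhol, hQsum⟩ := hQb g hgHol
    have hQsup0 : 0 ≤ supNormOn X (Qop ν Y Z g) :=
      le_trans (norm_nonneg _) (le_csSup hQbdd ⟨x, hx, rfl⟩)
    have hQholC : holderSemi X β (Qop ν Y Z g) ≤ C := by
      have h1 : C * holderSemi (X ∪ Y) β g ≤ C * 1 := mul_le_mul_of_nonneg_left hsemi_g hC0.le
      linarith
    obtain ⟨x'', hx''X, hdist⟩ := hXden (4 * r) (by positivity) hsa x hx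
    have hne'' : x ≠ x'' := by
      intro hcontra
      rw [hcontra, dist_self] at hdist
      linarith
    set h : M → ℂ := fun y => Z x y * g y with hhdef
    have hφsmall : ∀ y, dist x y ≤ r → φ y = 0 := by
      intro y hy
      simp only [hφdef]
      rw [max_eq_right (by linarith), min_eq_left hr0.le]
    have hgsmall : ∀ y, dist x y ≤ r → g y = 0 := by
      intro y hy
      simp only [hgdef, hφsmall y hy, Real.zero_rpow hβ0.ne', Complex.ofReal_zero]
    have hconst : (0:ℝ) ≤ N / r ^ υ * r ^ β := by positivity
    have hhb : ∀ y ∈ Y, ‖h y‖ ≤ N / r ^ υ * r ^ β := by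
      intro y hy
      rcases le_or_gt (dist x y) r with hd | hd
      · simp only [hhdef, hgsmall y hd, mul_zero, norm_zero]; exact hconst
      · have hZb := hker x hx y hy r hr0 hd.le
        calc ‖h y‖ = ‖Z x y‖ * ‖g y‖ := norm_mul _ _
          _ ≤ N / r ^ υ * r ^ β := mul_le_mul hZb (hgnorm y) (norm_nonneg _) (by positivity)
    have hφcont : Continuous φ := by
      apply Continuous.min _ continuous_const
      apply Continuous.max _ continuous_const
      exact (continuous_const.dist continuous_id).sub continuous_const
    have hgcont : Continuous g := by
      apply Complex.continuous_ofReal.comp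
      rw [continuous_iff_continuousAt]
      intro y
      exact (Real.continuousAt_rpow_const _ _ (Or.inr hβ0.le)).comp hφcont.continuousAt
    have haesm_h : AEStronglyMeasurable h (ν.restrict Y) := by
      apply aux_aesm ν hYm measurableSet_ball.compl
      · have hsub : Y ∩ (ball x r)ᶜ ⊆ Y \ {x} := by
          intro y hy
          refine ⟨hy.1, fun hyx => ?_⟩
          simp only [Set.mem_singleton_iff] at hyx
          exact hy.2 (by rw [hyx]; exact mem_ball_self hr0)
        exact ((hZxcont x hx).mono hsub).mul hgcont.continuousOn
      · intro y hy
        have hyb : y ∈ ball x r := by simpa using hy.2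
        rw [mem_ball, dist_comm] at hyb
        simp only [hhdef, hgsmall y hyb.le, mul_zero]
    have hint_h : IntegrableOn h Y ν := by
      have hcint : IntegrableOn (fun _ : M => N / r ^ υ * r ^ β) Y ν := by
        exact integrableOn_const hYfin.ne enorm_ne_top
      refine Integrable.mono' hcint haesm_h ?_
      exact (ae_restrict_iff' hYm).2 (Filter.Eventually.of_forall fun y hy => hhb y hy)
    have hQx : Qop ν Y Z g x = -∫ y in Y, h y ∂ν := by
      simp only [Qop, ← integral_neg]
      refine integral_congr_ae (Filter.Eventually.of_forall fun y => ?_)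
      rw [hgx]
      simp only [hhdef]
      ring
    have hmeasB : MeasurableSet (Y \ ball x (2*r)) := hYm.diff measurableSet_ball
    have hdisj : Disjoint (Y ∩ ball x (2*r)) (Y \ ball x (2*r)) :=
      disjoint_sdiff_self_right.mono_left inter_subset_right
    have hsplit : ∫ y in Y, h y ∂ν =
        (∫ y in Y ∩ ball x (2*r), h y ∂ν) + ∫ y in Y \ ball x (2*r), h y ∂ν := by
      rw [← setIntegral_union hdisj hmeasB
        (hint_h.mono_set inter_subset_left) (hint_h.mono_set diff_subset),
        Set.inter_union_diff]
    have hνB : (ν (Y ∩ ball x (2*r))).toReal ≤ c * (2*r) ^ υ :=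
      hAhl' x hx (2*r) (by positivity) hsρ
    have hνBfin : ν (Y ∩ ball x (2*r)) < ⊤ := by
      rw [Set.inter_comm]; exact hball x hx (2*r) (by positivity)
    have haesm_hB : AEStronglyMeasurable h (ν.restrict (Y ∩ ball x (2*r))) :=
      haesm_h.mono_measure (Measure.restrict_mono inter_subset_left le_rfl)
    have hJ1 : ‖∫ y in Y ∩ ball x (2*r), h y ∂ν‖ ≤ 2 ^ υ * (c * N) * r ^ β := by
      calc ‖∫ y in Y ∩ ball x (2*r), h y ∂ν‖
          ≤ N / r ^ υ * r ^ β * (ν (Y ∩ ball x (2*r))).toReal :=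
            norm_setIntegral_le_of_norm_le_const hνBfin (fun y hy => hhb y hy.1)
        _ ≤ N / r ^ υ * r ^ β * (c * (2*r) ^ υ) := mul_le_mul_of_nonneg_left hνB hconst
        _ = 2 ^ υ * (c * N) * r ^ β := by
            rw [Real.mul_rpow (by norm_num) hr0.le]
            have hrυ : r ^ υ ≠ 0 := (Real.rpow_pos_of_pos hr0 υ).ne'
            field_simp
    have hIfar : ∫ y in Y \ ball x (2*r), h y ∂ν =
        (∫ y in Y \ ball x (2*r), Z x y ∂ν) * ((r ^ β : ℝ) : ℂ) := by
      rw [← integral_mul_const]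
      apply setIntegral_congr_fun hmeasB
      intro y hy
      have hd : 2*r ≤ dist x y := by
        have hyb := hy.2
        rw [mem_ball, dist_comm] at hyb
        exact not_lt.mp hyb
      simp only [hhdef, hgfar y hd]
    set h'' : M → ℂ := fun y => Z x'' y * (((r ^ β : ℝ) : ℂ) - g y) with hh''def
    have hgx'' : g x'' = ((r ^ β : ℝ) : ℂ) := hgfar x'' (by rw [hdist]; linarith)
    have hQx'' : Qop ν Y Z g x'' = ∫ y in Y, h'' y ∂ν := by
      simp only [Qop, hh''def, hgx'']
    have hh''z : ∀ y, 2*r ≤ dist x y → h'' y = 0 := by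
      intro y hd
      simp only [hh''def, hgfar y hd, sub_self, mul_zero]
    have hconst'' : (0:ℝ) ≤ N / (2*r) ^ υ * r ^ β := by positivity
    have hh''b : ∀ y ∈ Y, ‖h'' y‖ ≤ N / (2*r) ^ υ * r ^ β := by
      intro y hy
      rcases lt_or_ge (dist x y) (2*r) with hd | hd
      · have hdd : 2*r ≤ dist x'' y := by
          have htri : dist x x'' ≤ dist x y + dist y x'' := dist_triangle x y x''
          have hcomm : dist y x'' = dist x'' y := dist_comm y x''
          rw [hdist] at htri
          linarith
        have hZb := hker x'' hx''X y hy (2*r) (by positivity) hdd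
        have hgb : ‖((r ^ β : ℝ) : ℂ) - g y‖ ≤ r ^ β := by
          simp only [hgdef, ← Complex.ofReal_sub, Complex.norm_real, Real.norm_eq_abs]
          rw [abs_of_nonneg (sub_nonneg.2 (Real.rpow_le_rpow (hφ0 y) (hφr y) hβ0.le))]
          have hφβ : 0 ≤ φ y ^ β := Real.rpow_nonneg (hφ0 y) β
          linarith
        calc ‖h'' y‖ = ‖Z x'' y‖ * ‖((r ^ β : ℝ) : ℂ) - g y‖ := norm_mul _ _
          _ ≤ N / (2*r) ^ υ * r ^ β := mul_le_mul hZb hgb (norm_nonneg _) (by positivity)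
      · simp only [hh''z y hd, norm_zero]; exact hconst''
    have haesm_h'' : AEStronglyMeasurable h'' (ν.restrict Y) := by
      apply aux_aesm ν hYm measurableSet_ball
      · have hsub : Y ∩ ball x (2*r) ⊆ Y \ {x''} := by
          intro y hy
          refine ⟨hy.1, fun hyx => ?_⟩
          simp only [Set.mem_singleton_iff] at hyx
          subst hyx
          have hyb := hy.2
          rw [mem_ball, dist_comm, hdist] at hyb
          linarith
        exact ((hZxcont x'' hx''X).mono hsub).mul (continuous_const.sub hgcont).continuousOn
      · intro y hy
        have hyb : ¬ y ∈ ball x (2*r) := hy.2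
        rw [mem_ball, dist_comm] at hyb
        exact hh''z y (not_lt.mp hyb)
    have hint_h'' : IntegrableOn h'' Y ν := by
      have hcint : IntegrableOn (fun _ : M => N / (2*r) ^ υ * r ^ β) Y ν := by
        exact integrableOn_const hYfin.ne enorm_ne_top
      refine Integrable.mono' hcint haesm_h'' ?_
      exact (ae_restrict_iff' hYm).2 (Filter.Eventually.of_forall fun y hy => hh''b y hy)
    have hzero'' : ∫ y in Y \ ball x (2*r), h'' y ∂ν = 0 := by
      have heq : Set.EqOn h'' (fun _ => (0:ℂ)) (Y \ ball x (2*r)) := by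
        intro y hy
        have hyb : ¬ y ∈ ball x (2*r) := hy.2
        rw [mem_ball, dist_comm] at hyb
        exact hh''z y (not_lt.mp hyb)
      rw [setIntegral_congr_fun hmeasB heq, integral_zero]
    have hQ''val : Qop ν Y Z g x'' = ∫ y in Y ∩ ball x (2*r), h'' y ∂ν := by
      have hsp := setIntegral_union hdisj hmeasB
        (hint_h''.mono_set inter_subset_left) (hint_h''.mono_set diff_subset)
      rw [Set.inter_union_diff] at hsp
      rw [hQx'', hsp, hzero'', add_zero]
    have hQ''b : ‖Qop ν Y Z g x''‖ ≤ c * N * r ^ β := by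
      rw [hQ''val]
      calc ‖∫ y in Y ∩ ball x (2*r), h'' y ∂ν‖
          ≤ N / (2*r) ^ υ * r ^ β * (ν (Y ∩ ball x (2*r))).toReal :=
            norm_setIntegral_le_of_norm_le_const hνBfin (fun y hy => hh''b y hy.1)
        _ ≤ N / (2*r) ^ υ * r ^ β * (c * (2*r) ^ υ) := mul_le_mul_of_nonneg_left hνB hconst''
        _ = c * N * r ^ β := by
            have h2rυ : (2*r) ^ υ ≠ 0 := (Real.rpow_pos_of_pos (by positivity) υ).ne'
            field_simp
    have hdistβ : (0:ℝ) < dist x x'' ^ β := Real.rpow_pos_of_pos (dist_pos.2 hne'') β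
    have hQdiff : ‖Qop ν Y Z g x - Qop ν Y Z g x''‖ ≤ C * (4*r) ^ β := by
      have hmem : ‖Qop ν Y Z g x - Qop ν Y Z g x''‖ / dist x x'' ^ β
          ∈ holderSet X β (Qop ν Y Z g) := ⟨x, hx, x'', hx''X, hne'', rfl⟩
      have hle := (le_csSup hQhol hmem).trans hQholC
      rw [div_le_iff₀ hdistβ] at hle
      rw [hdist] at hle
      linarith
    have hQxb : ‖Qop ν Y Z g x‖ ≤ c * N * r ^ β + C * (4*r) ^ β := by
      have hid : Qop ν Y Z g x = Qop ν Y Z g x'' + (Qop ν Y Z g x - Qop ν Y Z g x'') := by ring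
      calc ‖Qop ν Y Z g x‖
          = ‖Qop ν Y Z g x'' + (Qop ν Y Z g x - Qop ν Y Z g x'')‖ := by rw [← hid]
        _ ≤ ‖Qop ν Y Z g x''‖ + ‖Qop ν Y Z g x - Qop ν Y Z g x''‖ := norm_add_le _ _
        _ ≤ c * N * r ^ β + C * (4*r) ^ β := add_le_add hQ''b hQdiff
    have hkey : (∫ y in Y \ ball x (2*r), Z x y ∂ν) * ((r ^ β : ℝ) : ℂ)
        = -(Qop ν Y Z g x) - ∫ y in Y ∩ ball x (2*r), h y ∂ν := by
      rw [← hIfar, hQx, neg_neg, hsplit]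
      ring
    have hnorm_eq : ‖(∫ y in Y \ ball x (2*r), Z x y ∂ν) * ((r ^ β : ℝ) : ℂ)‖
        = ‖∫ y in Y \ ball x (2*r), Z x y ∂ν‖ * r ^ β := by
      rw [norm_mul, Complex.norm_real, Real.norm_eq_abs, abs_of_pos hrβpos]
    have hfinal : ‖∫ y in Y \ ball x (2*r), Z x y ∂ν‖ * r ^ β ≤ B₁ * r ^ β := by
      rw [← hnorm_eq, hkey]
      calc ‖-(Qop ν Y Z g x) - ∫ y in Y ∩ ball x (2*r), h y ∂ν‖
          ≤ ‖-(Qop ν Y Z g x)‖ + ‖∫ y in Y ∩ ball x (2*r), h y ∂ν‖ := norm_sub_le _ _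
        _ = ‖Qop ν Y Z g x‖ + ‖∫ y in Y ∩ ball x (2*r), h y ∂ν‖ := by rw [norm_neg]
        _ ≤ (c * N * r ^ β + C * (4*r) ^ β) + 2 ^ υ * (c * N) * r ^ β := add_le_add hQxb hJ1
        _ = B₁ * r ^ β := by
            rw [hB₁def, Real.mul_rpow (by norm_num) hr0.le]
            ring
    have hIb : ‖∫ y in Y \ ball x (2*r), Z x y ∂ν‖ ≤ B₁ :=
      le_of_mul_le_mul_right hfinal hrβpos
    have hbeq : ball x s = ball x (2*r) := by rw [hs2r]
    calc ‖∫ y in Y \ ball x s, Z x y ∂ν‖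
        = ‖∫ y in Y \ ball x (2*r), Z x y ∂ν‖ := by rw [hbeq]
      _ ≤ B₁ := hIb
      _ ≤ max B₁ B₂ := le_max_left _ _
  case _ => -- large s : direct bound
    have hmeas : MeasurableSet (Y \ ball x s) := hYm.diff measurableSet_ball
    have hsub : Y \ ball x s ⊆ Y \ {x} := by
      intro y hy
      refine ⟨hy.1, fun hyx => hy.2 ?_⟩
      simp only [Set.mem_singleton_iff] at hyx
      subst hyx
      exact mem_ball_self hs
    have haesm : AEStronglyMeasurable (fun y => Z x y) (ν.restrict (Y \ ball x s)) :=
      ((hZxcont x hx).mono hsub).aestronglyMeasurable hmeas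
    have hfin : ν (Y \ ball x s) < ⊤ := lt_of_le_of_lt (measure_mono diff_subset) hYfin
    have hb : ∀ y ∈ Y \ ball x s, ‖Z x y‖ ≤ N / T ^ υ := by
      intro y hy
      have hds : s ≤ dist x y := by
        have := hy.2
        rw [mem_ball, dist_comm] at this
        linarith [not_lt.mp this]
      exact hker x hx y hy.1 T hT0 (le_trans hsT hds)
    calc ‖∫ y in Y \ ball x s, Z x y ∂ν‖
        ≤ N / T ^ υ * (ν (Y \ ball x s)).toReal :=
          norm_setIntegral_le_of_norm_le_const hfin hb
      _ ≤ N / T ^ υ * (ν Y).toReal := by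
          have h1 : (ν (Y \ ball x s)).toReal ≤ (ν Y).toReal :=
            ENNReal.toReal_mono hYfin.ne (measure_mono diff_subset)
          have h2 : (0:ℝ) ≤ N / T ^ υ := by positivity
          exact mul_le_mul_of_nonneg_left h1 h2
      _ ≤ max B₁ B₂ := le_max_right _ _
end
end

section
/- Let (M,d) be a metric space and X, Y ⊆ M. Assume there exists a ∈ (0,∞) such that for each ρ ∈ (0,a) and each x' ∈ X there exists x'' ∈ X with d(x',x'') = ρ. Let υ_Y ∈ (0,∞), β ∈ (0,1], s₂ ∈ [β,∞), s₃ ∈ (0,1], with s₂ − β = υ_Y. Let ν be a measure on a σ-algebra of subsets of Y containing the Borel subsets of Y, with ν(B(x,r) ∩ Y) < ∞ for all x ∈ X and r > 0, and ν(Y) < ∞. Let Y be strongly upper υ_Y-Ahlfors regular with respect to X and let Z ∈ 𝒦_{υ_Y,s₂,s₃}(X×Y). If there exists C > 0 such that for every g ∈ C^{0,β}(X∪Y) the function Q[Z,g,1] is bounded on X with sup_X |Q[Z,g,1]| ≤ C·|g|_β and satisfies |Q[Z,g,1](x') − Q[Z,g,1](x'')| ≤ C·|g|_β·max{d(x',x'')^β,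 ω_{s₃}(d(x',x''))} for all x',x'' ∈ X, then sup over x ∈ X and r ∈ (0, e^{−1/s₃}) of |∫_{Y\B(x,r)} Z(x,y) dν(y)| · r^β / max{r^β, ω_{s₃}(r)} is finite. -/
open MeasureTheory Metric Set
open scoped ENNReal

noncomputable section

variable {M : Type*} [MetricSpace M] [MeasurableSpace M] [BorelSpace M]

set_option maxHeartbeats 1000000 in
theorem stmt_6 {M : Type*} [MetricSpace M] [MeasurableSpace M] [BorelSpace M]
    (X Y : Set M) (ν : Measure M) (hYm : MeasurableSet Y)
    (υ β s₂ s₃ : ℝ)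
    (hυ : 0 < υ) (hβ0 : 0 < β) (hβ1 : β ≤ 1) (hs₂ : β ≤ s₂) (hs₃0 : 0 < s₃) (hs₃1 : s₃ ≤ 1)
    (hball : ∀ x ∈ X, ∀ r : ℝ, 0 < r → ν (ball x r ∩ Y) < ⊤)
    (hYfin : ν Y < ⊤)
    (ha : ∃ a : ℝ, 0 < a ∧ ∀ ρ : ℝ, 0 < ρ → ρ < a → ∀ x' ∈ X, ∃ x'' ∈ X, dist x' x'' = ρ)
    (h1 : s₂ - β = υ)
    (hreg : StronglyUpperAhlforsRegular ν X Y υ)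
    (Z : M → M → ℂ) (hZ : MemK X Y υ s₂ s₃ Z)
    (hQ : ∃ C : ℝ, 0 < C ∧ ∀ g : M → ℂ, IsHolderOn (X ∪ Y) β g →
      BoundedOnSet X (Qop ν Y Z g) ∧
      supNormOn X (Qop ν Y Z g) ≤ C * holderSemi (X ∪ Y) β g ∧
      ∀ x' ∈ X, ∀ x'' ∈ X,
        ‖Qop ν Y Z g x' - Qop ν Y Z g x''‖ ≤
          C * holderSemi (X ∪ Y) β g * max (dist x' x'' ^ β) (omegaMod s₃ (dist x' x''))) :
    BddAbove {t : ℝ | ∃ x ∈ X, ∃ r : ℝ, 0 < r ∧ r < Real.exp (-1 / s₃) ∧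
      t = ‖∫ y in Y \ ball x r, Z x y ∂ν‖ * r ^ β /
        max (r ^ β) (omegaMod s₃ r)} := by
  classical
  obtain ⟨K₀, hK₀⟩ := hZ.2.1
  set K₁ : ℝ := max K₀ 1 with hK₁def
  have hK₁pos : (0:ℝ) < K₁ := lt_of_lt_of_le one_pos (le_max_right _ _)
  have hZbd : ∀ x ∈ X, ∀ y ∈ Y, x ≠ y → ‖Z x y‖ ≤ K₁ / dist x y ^ υ := by
    intro x hx y hy hxy
    have hd : 0 < dist x y := dist_pos.mpr hxy
    have hdp : 0 < dist x y ^ υ := Real.rpow_pos_of_pos hd υ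
    have h1' : dist x y ^ υ * ‖Z x y‖ ≤ K₀ := hK₀ ⟨x, hx, y, hy, hxy, rfl⟩
    rw [le_div_iff₀ hdp]
    calc ‖Z x y‖ * dist x y ^ υ = dist x y ^ υ * ‖Z x y‖ := mul_comm _ _
      _ ≤ K₀ := h1'
      _ ≤ K₁ := le_max_left _ _
  obtain ⟨c, hc, r₀, hr₀, hreg'⟩ := hreg
  obtain ⟨C, hC, hQ'⟩ := hQ
  obtain ⟨a, ha0, haρ⟩ := ha
  have hZcont : ∀ z ∈ X, ∀ S : Set M, S ⊆ Y → z ∉ S → ContinuousOn (fun y => Z z y) S := by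
    intro z hz S hSY hzS
    refine hZ.1.comp ((continuous_const.prodMk continuous_id).continuousOn) ?_
    intro y hy
    refine ⟨⟨hz, hSY hy⟩, ?_⟩
    simp only [Set.mem_setOf_eq]
    intro h
    apply hzS
    rw [show z = y from h]
    exact hy
  set ρ₀ : ℝ := if r₀ = ⊤ then 1 else r₀.toReal / 2 with hρ₀def
  have hρ₀pos : 0 < ρ₀ := by
    rw [hρ₀def]
    by_cases h : r₀ = ⊤
    · rw [if_pos h]; exact one_pos
    · rw [if_neg h]; exact half_pos (ENNReal.toReal_pos hr₀.ne' h)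
  have hρ₀lt : ∀ r : ℝ, r ≤ ρ₀ → ENNReal.ofReal r < r₀ := by
    intro r hr
    rw [hρ₀def] at hr
    by_cases h : r₀ = ⊤
    · rw [h]; exact ENNReal.ofReal_lt_top
    · rw [if_neg h] at hr
      have htp : 0 < r₀.toReal := ENNReal.toReal_pos hr₀.ne' h
      calc ENNReal.ofReal r ≤ ENNReal.ofReal (r₀.toReal / 2) := ENNReal.ofReal_le_ofReal hr
        _ < ENNReal.ofReal r₀.toReal := by
            rw [ENNReal.ofReal_lt_ofReal_iff htp]; linarith
        _ = r₀ := ENNReal.ofReal_toReal h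
  have hmeasB : ∀ x ∈ X, ∀ r : ℝ, 0 < r → r ≤ ρ₀ → (ν (ball x r ∩ Y)).toReal ≤ c * r ^ υ := by
    intro x hx r h0 h1'
    have h2 := hreg' x hx 0 r le_rfl h0 (hρ₀lt r h1')
    rw [Metric.ball_zero, Set.diff_empty, Real.zero_rpow hυ.ne', sub_zero] at h2
    exact ENNReal.toReal_le_of_le_ofReal
      (mul_nonneg hc.le (Real.rpow_nonneg h0.le υ)) h2
  set δ : ℝ := min a ρ₀ with hδdef
  have hδpos : 0 < δ := lt_min ha0 hρ₀pos
  have haesm : ∀ z ∈ X, ∀ S : Set M, MeasurableSet S → S ⊆ Y → z ∉ S →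
      AEStronglyMeasurable (fun y => Z z y) (ν.restrict S) := by
    intro z hz S hSm hSY hzS
    exact (hZcont z hz S hSY hzS).aestronglyMeasurable hSm
  have hdivmono : ∀ s u : ℝ, 0 < s → s ≤ u → K₁ / u ^ υ ≤ K₁ / s ^ υ := by
    intro s u hs hsu
    have h5 : 0 < s ^ υ := Real.rpow_pos_of_pos hs υ
    have h4 : s ^ υ ≤ u ^ υ := Real.rpow_le_rpow hs.le hsu hυ.le
    exact div_le_div_of_nonneg_left hK₁pos.le h5 h4
  have hkey : ∀ z ∈ X, ∀ S : Set M, MeasurableSet S → S ⊆ Y → ∀ s : ℝ, 0 < s →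
      (∀ y ∈ S, s ≤ dist z y) → ∀ w : M → ℂ, Continuous w → (∀ y, ‖w y‖ ≤ 1) →
      IntegrableOn (fun y => Z z y * w y) S ν ∧
      ‖∫ y in S, Z z y * w y ∂ν‖ ≤ K₁ / s ^ υ * (ν S).toReal := by
    intro z hz S hSm hSY s hs hsd w hwc hw1
    have hzS : z ∉ S := by
      intro h
      have h2 := hsd z h
      rw [dist_self] at h2
      linarith
    have hbd : ∀ y ∈ S, ‖Z z y * w y‖ ≤ K₁ / s ^ υ := by
      intro y hy
      have hd := hsd y hy
      have hne : z ≠ y := by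
        intro h
        rw [← h, dist_self] at hd
        linarith
      have h3 : ‖Z z y‖ ≤ K₁ / dist z y ^ υ := hZbd z hz y (hSY hy) hne
      calc ‖Z z y * w y‖ = ‖Z z y‖ * ‖w y‖ := norm_mul _ _
        _ ≤ (K₁ / dist z y ^ υ) * 1 := by
            apply mul_le_mul h3 (hw1 y) (norm_nonneg _)
              (div_nonneg hK₁pos.le (Real.rpow_nonneg dist_nonneg υ))
        _ = K₁ / dist z y ^ υ := mul_one _
        _ ≤ K₁ / s ^ υ := hdivmono s (dist z y) hs hd
    have hfin : ν S < ⊤ := lt_of_le_of_lt (measure_mono hSY) hYfin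
    have hsm : AEStronglyMeasurable (fun y => Z z y * w y) (ν.restrict S) :=
      (haesm z hz S hSm hSY hzS).mul hwc.aestronglyMeasurable
    refine ⟨?_, norm_setIntegral_le_of_norm_le_const hfin hbd⟩
    exact Integrable.mono' (integrableOn_const hfin.ne) hsm
      ((ae_restrict_iff' hSm).mpr (ae_of_all _ hbd))
  refine ⟨max (3 * (c * K₁ * (4:ℝ) ^ υ) + C * (4:ℝ) ^ β) (K₁ / δ ^ υ * (ν Y).toReal), ?_⟩
  rintro t ⟨x, hx, r, hr0, hre, rfl⟩
  have hrβ : 0 < r ^ β := Real.rpow_pos_of_pos hr0 β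
  set Mx : ℝ := max (r ^ β) (omegaMod s₃ r) with hMxdef
  have hrMx : r ^ β ≤ Mx := le_max_left _ _
  have hMx : 0 < Mx := lt_of_lt_of_le hrβ hrMx
  rcases lt_or_ge r δ with hsmall | hlarge
  swap
  · -- large radius: direct estimate
    have hsub : Y \ ball x r ⊆ Y := Set.diff_subset
    have hd : ∀ y ∈ Y \ ball x r, r ≤ dist x y := by
      intro y hy
      rw [dist_comm]
      exact not_lt.mp (fun h => hy.2 (Metric.mem_ball.mpr h))
    have hk := hkey x hx (Y \ ball x r) (hYm.diff measurableSet_ball) hsub r hr0 hd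
      (fun _ => 1) continuous_const (fun _ => by simp)
    have hb := hk.2
    simp only [mul_one] at hb
    have hb2 : ‖∫ y in Y \ ball x r, Z x y ∂ν‖ ≤ K₁ / δ ^ υ * (ν Y).toReal := by
      refine hb.trans ?_
      have h1' : (ν (Y \ ball x r)).toReal ≤ (ν Y).toReal :=
        ENNReal.toReal_mono hYfin.ne (measure_mono hsub)
      have h2' : K₁ / r ^ υ ≤ K₁ / δ ^ υ := hdivmono δ r hδpos hlarge
      apply mul_le_mul h2' h1' ENNReal.toReal_nonneg
        (div_nonneg hK₁pos.le (Real.rpow_nonneg hδpos.le υ))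
    refine le_trans ?_ (le_max_right _ _)
    calc ‖∫ y in Y \ ball x r, Z x y ∂ν‖ * r ^ β / Mx
        = ‖∫ y in Y \ ball x r, Z x y ∂ν‖ * (r ^ β / Mx) := by rw [mul_div_assoc]
      _ ≤ ‖∫ y in Y \ ball x r, Z x y ∂ν‖ * 1 := by
          apply mul_le_mul_of_nonneg_left _ (norm_nonneg _)
          exact (div_le_one hMx).mpr hrMx
      _ = ‖∫ y in Y \ ball x r, Z x y ∂ν‖ := mul_one _
      _ ≤ K₁ / δ ^ υ * (ν Y).toReal := hb2
  · -- small radius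
    have hra : r < a := lt_of_lt_of_le hsmall (min_le_left _ _)
    have hrρ₀ : r ≤ ρ₀ := (lt_of_lt_of_le hsmall (min_le_right _ _)).le
    obtain ⟨x'', hx'', hdx⟩ := haρ r hr0 hra x hx
    -- the bump function
    set gr : M → ℝ := fun y => min 1 (max 0 (2 - 4 * dist x y / r)) with hgrdef
    set g : M → ℂ := fun y => ((gr y : ℝ) : ℂ) with hgdef
    have hgr0 : ∀ y, 0 ≤ gr y := fun y => le_min zero_le_one (le_max_left _ _)
    have hgr1 : ∀ y, gr y ≤ 1 := fun y => min_le_left _ _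
    have hgrout : ∀ y, r / 2 ≤ dist x y → gr y = 0 := by
      intro y hy
      have h4 : 2 - 4 * dist x y / r ≤ 0 := by
        rw [sub_nonpos, le_div_iff₀ hr0]; linarith
      simp only [hgrdef]
      rw [max_eq_left h4, min_eq_right zero_le_one]
    have hgrin : ∀ y, dist x y ≤ r / 4 → gr y = 1 := by
      intro y hy
      have h5 : 4 * dist x y / r ≤ 1 := by
        rw [div_le_one hr0]; linarith
      have h4 : (1:ℝ) ≤ 2 - 4 * dist x y / r := by linarith
      simp only [hgrdef]
      rw [max_eq_right (by linarith), min_eq_left h4]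
    have hgx : g x = 1 := by
      simp only [hgdef]
      rw [hgrin x (by rw [dist_self]; linarith)]
      norm_num
    have hgx'' : g x'' = 0 := by
      simp only [hgdef]
      rw [hgrout x'' (by rw [hdx]; linarith)]
      norm_num
    have hglip : ∀ y z : M, ‖g y - g z‖ ≤ min 1 (4 * dist y z / r) := by
      intro y z
      have hnorm : ‖g y - g z‖ = |gr y - gr z| := by
        simp only [hgdef]
        rw [← Complex.ofReal_sub, Complex.norm_real, Real.norm_eq_abs]
      rw [hnorm]
      refine le_min ?_ ?_
      · have h1' := hgr0 y; have h2' := hgr1 y; have h3' := hgr0 z; have h4' := hgr1 z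
        rw [abs_le]; constructor <;> linarith
      · calc |gr y - gr z|
            ≤ |max 0 (2 - 4 * dist x y / r) - max 0 (2 - 4 * dist x z / r)| := by
              have h := abs_min_sub_min_le_max (1:ℝ) (max 0 (2 - 4 * dist x y / r)) 1
                (max 0 (2 - 4 * dist x z / r))
              simpa [hgrdef] using h
          _ ≤ |(2 - 4 * dist x y / r) - (2 - 4 * dist x z / r)| := by
              have h := abs_max_sub_max_le_max (0:ℝ) (2 - 4 * dist x y / r) 0
                (2 - 4 * dist x z / r)
              simpa using h
          _ = 4 / r * |dist x z - dist x y| := by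
              rw [← abs_of_pos (show (0:ℝ) < 4 / r from div_pos (by norm_num) hr0), ← abs_mul]
              congr 1
              ring
          _ ≤ 4 / r * dist y z := by
              have h := abs_dist_sub_le z y x
              rw [dist_comm z x, dist_comm y x] at h
              rw [dist_comm y z]
              exact mul_le_mul_of_nonneg_left h (le_of_lt (div_pos (by norm_num) hr0))
          _ = 4 * dist y z / r := by ring
    have hmin_rpow : ∀ u : ℝ, 0 ≤ u → min 1 u ≤ u ^ β := by
      intro u hu
      rcases le_or_gt 1 u with h | h
      · exact le_trans (min_le_left _ _) (Real.one_le_rpow h hβ0.le)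
      · rcases eq_or_lt_of_le hu with h0 | h0
        · simp [← h0, Real.zero_rpow hβ0.ne']
        · refine le_trans (min_le_right _ _) ?_
          calc u = u ^ (1:ℝ) := (Real.rpow_one u).symm
            _ ≤ u ^ β := Real.rpow_le_rpow_of_exponent_ge h0 h.le hβ1
    have hholdelt : ∀ y z : M, y ≠ z → ‖g y - g z‖ / dist y z ^ β ≤ (4 / r) ^ β := by
      intro y z hyz
      have hd : 0 < dist y z := dist_pos.mpr hyz
      have hdβ : 0 < dist y z ^ β := Real.rpow_pos_of_pos hd β
      rw [div_le_iff₀ hdβ]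
      calc ‖g y - g z‖ ≤ min 1 (4 * dist y z / r) := hglip y z
        _ ≤ (4 * dist y z / r) ^ β :=
            hmin_rpow _ (div_nonneg (mul_nonneg (by norm_num) dist_nonneg) hr0.le)
        _ = (4 / r * dist y z) ^ β := by rw [show 4 * dist y z / r = 4 / r * dist y z by ring]
        _ = (4 / r) ^ β * dist y z ^ β :=
            Real.mul_rpow (div_nonneg (by norm_num) hr0.le) hd.le
    have hgH : IsHolderOn (X ∪ Y) β g := by
      refine ⟨(4 / r) ^ β, mem_upperBounds.mpr ?_⟩
      rintro t ⟨y, hy, z, hz, hyz, rfl⟩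
      exact hholdelt y z hyz
    have hsemi : holderSemi (X ∪ Y) β g ≤ (4 / r) ^ β := by
      apply Real.sSup_le
      · rintro t ⟨y, hy, z, hz, hyz, rfl⟩
        exact hholdelt y z hyz
      · exact Real.rpow_nonneg (div_nonneg (by norm_num) hr0.le) β
    have hgrc : Continuous gr := by
      apply Continuous.min continuous_const
      apply Continuous.max continuous_const
      exact (continuous_const.sub ((continuous_const.mul
        (continuous_const.dist continuous_id)).div_const r))
    have hgc : Continuous g := Complex.continuous_ofReal.comp hgrc
    -- sets
    set S0 : Set M := Y ∩ ball x (r/2) with hS0def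
    set A : Set M := Y \ ball x (r/2) with hAdef
    set Sann : Set M := S0 \ ball x (r/4) with hSanndef
    set S04 : Set M := S0 ∩ ball x (r/4) with hS04def
    have hS0m : MeasurableSet S0 := hYm.inter measurableSet_ball
    have hAm : MeasurableSet A := hYm.diff measurableSet_ball
    have hSannm : MeasurableSet Sann := hS0m.diff measurableSet_ball
    have hS04m : MeasurableSet S04 := hS0m.inter measurableSet_ball
    have hS0Y : S0 ⊆ Y := Set.inter_subset_left
    have hAY : A ⊆ Y := Set.diff_subset
    have hS0sub : S0 ⊆ ball x r ∩ Y := by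
      rintro y ⟨hyY, hyB⟩
      exact ⟨Metric.mem_ball.mpr (lt_of_lt_of_le (Metric.mem_ball.mp hyB) (by linarith)), hyY⟩
    -- measure bound
    have hνr : ∀ S : Set M, S ⊆ ball x r ∩ Y → (ν S).toReal ≤ c * r ^ υ := by
      intro S hS
      exact le_trans (ENNReal.toReal_mono (hball x hx r hr0).ne (measure_mono hS))
        (hmeasB x hx r hr0 hrρ₀)
    have hrυ : 0 < r ^ υ := Real.rpow_pos_of_pos hr0 υ
    have harith : ∀ k : ℝ, 0 < k → k ≤ 4 → K₁ / (r / k) ^ υ * (c * r ^ υ) ≤ c * K₁ * 4 ^ υ := by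
      intro k hk hk4
      have h1' : (r / k) ^ υ = r ^ υ / k ^ υ := Real.div_rpow hr0.le hk.le υ
      have h3 : k ^ υ ≤ (4:ℝ) ^ υ := Real.rpow_le_rpow hk.le hk4 hυ.le
      have hkυ : 0 < k ^ υ := Real.rpow_pos_of_pos hk υ
      rw [h1', div_div_eq_mul_div]
      calc K₁ * k ^ υ / r ^ υ * (c * r ^ υ) = c * K₁ * k ^ υ := by
            field_simp
        _ ≤ c * K₁ * 4 ^ υ := mul_le_mul_of_nonneg_left h3 (mul_nonneg hc.le hK₁pos.le)
    have hpiece : ∀ z ∈ X, ∀ S : Set M, MeasurableSet S → S ⊆ Y → S ⊆ ball x r ∩ Y →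
        ∀ k : ℝ, 0 < k → k ≤ 4 → (∀ y ∈ S, r / k ≤ dist z y) →
        ∀ w : M → ℂ, Continuous w → (∀ y, ‖w y‖ ≤ 1) →
        IntegrableOn (fun y => Z z y * w y) S ν ∧
        ‖∫ y in S, Z z y * w y ∂ν‖ ≤ c * K₁ * 4 ^ υ := by
      intro z hz S hSm hSY hSb k hk hk4 hsd w hwc hw1
      have hrk : 0 < r / k := div_pos hr0 hk
      obtain ⟨hint, hbd⟩ := hkey z hz S hSm hSY (r / k) hrk hsd w hwc hw1
      refine ⟨hint, hbd.trans ?_⟩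
      calc K₁ / (r / k) ^ υ * (ν S).toReal ≤ K₁ / (r / k) ^ υ * (c * r ^ υ) := by
            apply mul_le_mul_of_nonneg_left (hνr S hSb)
            exact div_nonneg hK₁pos.le (Real.rpow_nonneg hrk.le υ)
        _ ≤ c * K₁ * 4 ^ υ := harith k hk hk4
    -- distance facts
    have hdSann : ∀ y ∈ Sann, r / 4 ≤ dist x y := by
      intro y hy
      rw [dist_comm]
      exact not_lt.mp (fun h => hy.2 (Metric.mem_ball.mpr h))
    have hdA : ∀ y ∈ A, r / 2 ≤ dist x y := by
      intro y hy
      rw [dist_comm]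
      exact not_lt.mp (fun h => hy.2 (Metric.mem_ball.mpr h))
    have hdS0'' : ∀ y ∈ S0, r / 2 ≤ dist x'' y := by
      intro y hy
      have hyb : dist y x < r / 2 := Metric.mem_ball.mp hy.2
      have ht := dist_triangle x y x''
      rw [hdx, dist_comm x y] at ht
      rw [dist_comm x'' y]
      linarith
    -- norm bounds on the auxiliary factors
    have hw1bound : ∀ y, ‖(1:ℂ) - g y‖ ≤ 1 := by
      intro y
      have h0 := hgr0 y; have h1' := hgr1 y
      have he : ((1:ℂ) - g y) = (((1 - gr y : ℝ)) : ℂ) := by simp [hgdef]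
      rw [he, Complex.norm_real, Real.norm_eq_abs, abs_le]
      constructor <;> linarith
    have hw2bound : ∀ y, ‖g x'' - g y‖ ≤ 1 := by
      intro y
      have h0 := hgr0 y; have h1' := hgr1 y
      have he : (g x'' - g y) = (((0 - gr y : ℝ)) : ℂ) := by
        rw [hgx'']; simp [hgdef]
      rw [he, Complex.norm_real, Real.norm_eq_abs, abs_le]
      constructor <;> linarith
    -- main pieces
    have hp1 := hpiece x hx Sann hSannm (fun y hy => hS0Y hy.1)
      (fun y hy => hS0sub hy.1) 4 (by norm_num) le_rfl hdSann
      (fun y => 1 - g y) (continuous_const.sub hgc) hw1bound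
    have hpmid := hpiece x hx (A ∩ ball x r) (hAm.inter measurableSet_ball)
      (fun y hy => hAY hy.1)
      (fun y hy => ⟨hy.2, hAY hy.1⟩) 2 (by norm_num) (by norm_num)
      (fun y hy => hdA y hy.1)
      (fun _ => 1) continuous_const (fun _ => by simp)
    simp only [mul_one] at hpmid
    have hp2 := hpiece x'' hx'' S0 hS0m hS0Y hS0sub 2 (by norm_num) (by norm_num) hdS0''
      (fun y => g x'' - g y) (continuous_const.sub hgc) hw2bound
    -- f vanishes on S04
    have hf04 : Set.EqOn (fun _ => (0:ℂ)) (fun y => Z x y * (1 - g y)) S04 := by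
      intro y hy
      have hd : dist x y ≤ r / 4 := by
        rw [dist_comm]
        exact (Metric.mem_ball.mp hy.2).le
      have : gr y = 1 := hgrin y hd
      simp [hgdef, this]
    have hint04 : IntegrableOn (fun y => Z x y * (1 - g y)) S04 ν :=
      (integrableOn_zero).congr_fun hf04 hS04m
    have hval04 : ∫ y in S04, Z x y * (1 - g y) ∂ν = 0 := by
      rw [setIntegral_congr_fun hS04m hf04.symm]
      exact integral_zero _ _
    have hS0union : S04 ∪ Sann = S0 := Set.inter_union_diff S0 (ball x (r/4))
    have hdisj04 : Disjoint S04 Sann := Set.disjoint_left.mpr fun y hy1 hy2 => hy2.2 hy1.2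
    have hintS0 : IntegrableOn (fun y => Z x y * (1 - g y)) S0 ν := by
      rw [← hS0union]
      exact hint04.union hp1.1
    have hvalS0 : ∫ y in S0, Z x y * (1 - g y) ∂ν = ∫ y in Sann, Z x y * (1 - g y) ∂ν := by
      rw [← hS0union, setIntegral_union hdisj04 hSannm hint04 hp1.1, hval04, zero_add]
    have hS0bd : ‖∫ y in S0, Z x y * (1 - g y) ∂ν‖ ≤ c * K₁ * 4 ^ υ := by
      rw [hvalS0]; exact hp1.2
    -- on A, the integrand equals Z x
    have hAf : Set.EqOn (fun y => Z x y * (1 - g y)) (fun y => Z x y) A := by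
      intro y hy
      have : gr y = 0 := hgrout y (hdA y hy)
      simp [hgdef, this]
    have hkA := hkey x hx A hAm hAY (r/2) (by linarith) hdA
      (fun _ => 1) continuous_const (fun _ => by simp)
    have hAint : IntegrableOn (fun y => Z x y) A ν := by
      have := hkA.1
      simpa only [mul_one] using this
    have hfAint : IntegrableOn (fun y => Z x y * (1 - g y)) A ν :=
      hAint.congr_fun (fun y hy => (hAf hy).symm) hAm
    have hYunion : S0 ∪ A = Y := Set.inter_union_diff Y (ball x (r/2))
    have hdisjS0A : Disjoint S0 A := Set.disjoint_left.mpr fun y hy1 hy2 => hy2.2 hy1.2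
    have hQx : Qop ν Y Z g x
        = (∫ y in S0, Z x y * (1 - g y) ∂ν) + ∫ y in A, Z x y * (1 - g y) ∂ν := by
      have h0 : Qop ν Y Z g x = ∫ y in Y, Z x y * (1 - g y) ∂ν := by
        simp only [Qop, hgx]
      rw [h0, ← hYunion, setIntegral_union hdisjS0A hAm hintS0 hfAint]
    have hintAeq : ∫ y in A, Z x y * (1 - g y) ∂ν = ∫ y in A, Z x y ∂ν :=
      setIntegral_congr_fun hAm hAf
    -- split A into the far part and the middle annulus
    have hAsplit : (Y \ ball x r) ∪ (A ∩ ball x r) = A := by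
      ext y
      simp only [Set.mem_union, Set.mem_diff, Set.mem_inter_iff, Metric.mem_ball, hAdef]
      constructor
      · rintro (⟨hyY, hd⟩ | ⟨⟨hyY, hd⟩, _⟩)
        · exact ⟨hyY, fun hlt => hd (lt_of_lt_of_le hlt (by linarith))⟩
        · exact ⟨hyY, hd⟩
      · rintro ⟨hyY, hd⟩
        rcases lt_or_ge (dist y x) r with h | h
        · exact Or.inr ⟨⟨hyY, hd⟩, h⟩
        · exact Or.inl ⟨hyY, not_lt.mpr h⟩
    have hfarA : Y \ ball x r ⊆ A := by
      rintro y ⟨hyY, hd⟩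
      refine ⟨hyY, fun hlt => hd ?_⟩
      exact Metric.mem_ball.mpr (lt_of_lt_of_le (Metric.mem_ball.mp hlt) (by linarith))
    have hdisjm : Disjoint (Y \ ball x r) (A ∩ ball x r) :=
      Set.disjoint_left.mpr fun y hy1 hy2 => hy1.2 hy2.2
    have hIsplit : ∫ y in A, Z x y ∂ν
        = (∫ y in Y \ ball x r, Z x y ∂ν) + ∫ y in A ∩ ball x r, Z x y ∂ν := by
      conv_lhs => rw [← hAsplit]
      exact setIntegral_union hdisjm (hAm.inter measurableSet_ball)
        (hAint.mono_set hfarA) (hAint.mono_set Set.inter_subset_left)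
    -- the x'' term
    have hA0 : Set.EqOn (fun y => Z x'' y * (g x'' - g y)) (fun _ => (0:ℂ)) A := by
      intro y hy
      have hgy : g y = 0 := by simp [hgdef, hgrout y (hdA y hy)]
      show Z x'' y * (g x'' - g y) = 0
      rw [hgx'', hgy, sub_zero, mul_zero]
    have hint''A : IntegrableOn (fun y => Z x'' y * (g x'' - g y)) A ν :=
      (integrableOn_zero).congr_fun hA0.symm hAm
    have hval''A : ∫ y in A, Z x'' y * (g x'' - g y) ∂ν = 0 := by
      rw [setIntegral_congr_fun hAm hA0]
      exact integral_zero _ _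
    have hQx''bd : ‖Qop ν Y Z g x''‖ ≤ c * K₁ * 4 ^ υ := by
      have h0 : Qop ν Y Z g x'' = ∫ y in S0, Z x'' y * (g x'' - g y) ∂ν := by
        show (∫ y in Y, Z x'' y * (g x'' - g y) ∂ν) = _
        rw [← hYunion, setIntegral_union hdisjS0A hAm hp2.1 hint''A, hval''A, add_zero]
      rw [h0]
      exact hp2.2
    -- Hölder estimate difference
    have hQdiff : ‖Qop ν Y Z g x - Qop ν Y Z g x''‖ ≤ C * (4 / r) ^ β * Mx := by
      have h := (hQ' g hgH).2.2 x hx x'' hx''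
      rw [hdx, ← hMxdef] at h
      refine h.trans ?_
      apply mul_le_mul_of_nonneg_right _ hMx.le
      exact mul_le_mul_of_nonneg_left hsemi hC.le
    -- assemble
    have hIeq : (∫ y in Y \ ball x r, Z x y ∂ν)
        = Qop ν Y Z g x - (∫ y in S0, Z x y * (1 - g y) ∂ν)
          - ∫ y in A ∩ ball x r, Z x y ∂ν := by
      rw [hQx, hintAeq, hIsplit]; ring
    have hQxbd : ‖Qop ν Y Z g x‖ ≤ c * K₁ * 4 ^ υ + C * (4 / r) ^ β * Mx := by
      calc ‖Qop ν Y Z g x‖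
          = ‖Qop ν Y Z g x'' + (Qop ν Y Z g x - Qop ν Y Z g x'')‖ := by congr 1; ring
        _ ≤ ‖Qop ν Y Z g x''‖ + ‖Qop ν Y Z g x - Qop ν Y Z g x''‖ := norm_add_le _ _
        _ ≤ c * K₁ * 4 ^ υ + C * (4 / r) ^ β * Mx := add_le_add hQx''bd hQdiff
    have hIbound : ‖∫ y in Y \ ball x r, Z x y ∂ν‖
        ≤ 3 * (c * K₁ * 4 ^ υ) + C * (4 / r) ^ β * Mx := by
      rw [hIeq]
      calc ‖Qop ν Y Z g x - (∫ y in S0, Z x y * (1 - g y) ∂ν)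
            - ∫ y in A ∩ ball x r, Z x y ∂ν‖
          ≤ ‖Qop ν Y Z g x - (∫ y in S0, Z x y * (1 - g y) ∂ν)‖
            + ‖∫ y in A ∩ ball x r, Z x y ∂ν‖ := norm_sub_le _ _
        _ ≤ (‖Qop ν Y Z g x‖ + ‖∫ y in S0, Z x y * (1 - g y) ∂ν‖)
            + ‖∫ y in A ∩ ball x r, Z x y ∂ν‖ := add_le_add_left (norm_sub_le _ _) _
        _ ≤ 3 * (c * K₁ * 4 ^ υ) + C * (4 / r) ^ β * Mx := by
            have h3' := hpmid.2
            linarith [hQxbd, hS0bd]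
    -- final arithmetic
    have h4β : ((4:ℝ) / r) ^ β = 4 ^ β / r ^ β := Real.div_rpow (by norm_num) hr0.le β
    have hpos1 : 0 ≤ 3 * (c * K₁ * (4:ℝ) ^ υ) := by
      have h4υ : (0:ℝ) ≤ 4 ^ υ := Real.rpow_nonneg (by norm_num) υ
      have := mul_nonneg (mul_nonneg hc.le hK₁pos.le) h4υ
      linarith
    refine le_trans ?_ (le_max_left _ _)
    rw [div_le_iff₀ hMx]
    calc ‖∫ y in Y \ ball x r, Z x y ∂ν‖ * r ^ β
        ≤ (3 * (c * K₁ * 4 ^ υ) + C * (4 / r) ^ β * Mx) * r ^ β :=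
          mul_le_mul_of_nonneg_right hIbound hrβ.le
      _ = 3 * (c * K₁ * 4 ^ υ) * r ^ β + C * 4 ^ β * Mx * (r ^ β / r ^ β) := by
          rw [h4β]; ring
      _ = 3 * (c * K₁ * 4 ^ υ) * r ^ β + C * 4 ^ β * Mx := by
          rw [div_self hrβ.ne', mul_one]
      _ ≤ 3 * (c * K₁ * 4 ^ υ) * Mx + C * 4 ^ β * Mx := by
          have := mul_le_mul_of_nonneg_left hrMx hpos1
          linarith
      _ = (3 * (c * K₁ * 4 ^ υ) + C * 4 ^ β) * Mx := by ring
end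
end

section
/- Let (M,d) be a metric space and X, Y ⊆ M. Assume there exists a ∈ (0,∞) such that for each ρ ∈ (0,a) and each x' ∈ X there exists x'' ∈ X with d(x',x'') = ρ. Let υ_Y ∈ (0,∞), β ∈ (0,1], s₂ ∈ [β,∞), s₃ ∈ (0,1], with s₂ − β = υ_Y and in addition s₃ > β. Let ν be a measure on a σ-algebra of subsets of Y containing the Borel subsets of Y, with ν(B(x,r) ∩ Y) < ∞ for all x ∈ X and r > 0, and ν(Y) < ∞. Let Y be strongly upper υ_Y-Ahlfors regular with respect to X and let Z ∈ 𝒦_{υ_Y,s₂,s₃}(X×Y). If there exists C > 0 such that for every g ∈ C^{0,β}(X∪Y) the function Q[Z,g,1] is bounded and β-Hölder continuous on X with sup-norm plus β-Hölder seminorm at most C·|g|_β, then sup_{x∈X} sup_{r>0} |∫_{Y\B(x,r)} Z(x,y) dν(y)| < ∞. -/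
open MeasureTheory Metric Set
open scoped ENNReal

noncomputable section

variable {M : Type*} [MetricSpace M] [MeasurableSpace M] [BorelSpace M]

open Filter Topology

lemma aux_min_le_rpow {β t : ℝ} (hβ0 : 0 < β) (hβ1 : β ≤ 1) (ht : 0 ≤ t) :
    min 1 t ≤ t ^ β := by
  rcases eq_or_lt_of_le ht with h | h
  · simp [← h, Real.zero_rpow hβ0.ne']
  rcases le_or_gt t 1 with h1 | h1
  · calc min 1 t ≤ t := min_le_right _ _
    _ = t ^ (1:ℝ) := (Real.rpow_one t).symm
    _ ≤ t ^ β := Real.rpow_le_rpow_of_exponent_ge h h1 hβ1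
  · calc min 1 t ≤ 1 := min_le_left _ _
    _ ≤ t ^ β := Real.one_le_rpow h1.le hβ0.le

lemma aux_abs_min_sub (p q : ℝ) : |min 1 p - min 1 q| ≤ |p - q| := by
  rcases le_total p q with h | h <;> rcases le_total p 1 with hp | hp <;>
    rcases le_total q 1 with hq | hq <;>
    simp [min_eq_left, min_eq_right, hp, hq, abs_le] <;> constructor <;>
    nlinarith [abs_nonneg (p-q), le_abs_self (p-q), neg_abs_le (p-q)]

lemma aux_singleton_null {M : Type*} [MetricSpace M] [MeasurableSpace M]
    (Y : Set M) (ν : Measure M) {υ c : ℝ} (hυ : 0 < υ) {r₀ : ℝ≥0∞}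
    {ρ₀ : ℝ} (hρ₀ : 0 < ρ₀) (hρr : ENNReal.ofReal ρ₀ < r₀) (x : M)
    (hreg : ∀ r₁ r₂ : ℝ, 0 ≤ r₁ → r₁ < r₂ → ENNReal.ofReal r₂ < r₀ →
      ν ((ball x r₂ \ ball x r₁) ∩ Y) ≤ ENNReal.ofReal (c * (r₂ ^ υ - r₁ ^ υ))) :
    ν (Y ∩ {x}) = 0 := by
  have hseq : Tendsto (fun n : ℕ => ρ₀ * (1/2 : ℝ) ^ n) atTop (𝓝 0) := by
    simpa using (tendsto_pow_atTop_nhds_zero_of_lt_one (by norm_num : (0:ℝ) ≤ 1/2)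
      (by norm_num : (1/2:ℝ) < 1)).const_mul ρ₀
  have hcont : ContinuousAt (fun t : ℝ => ENNReal.ofReal (c * t ^ υ)) 0 := by
    apply ENNReal.continuous_ofReal.continuousAt.comp
    exact (continuousAt_const.mul (Real.continuousAt_rpow_const 0 υ (Or.inr hυ.le)))
  have hlim : Tendsto (fun n : ℕ => ENNReal.ofReal (c * (ρ₀ * (1/2:ℝ) ^ n) ^ υ)) atTop (𝓝 0) := by
    have := hcont.tendsto.comp hseq
    simpa [Function.comp_def, Real.zero_rpow hυ.ne'] using this
  have hbound : ∀ n : ℕ, ν (Y ∩ {x}) ≤ ENNReal.ofReal (c * (ρ₀ * (1/2:ℝ) ^ n) ^ υ) := by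
    intro n
    set ε := ρ₀ * (1/2:ℝ) ^ n with hε
    have hεpos : 0 < ε := by positivity
    have hεle : ε ≤ ρ₀ := by
      rw [hε]
      nlinarith [pow_le_one₀ (by norm_num : (0:ℝ) ≤ 1/2) (by norm_num : (1/2:ℝ) ≤ 1) (n := n)]
    have := hreg 0 ε le_rfl hεpos (lt_of_le_of_lt (ENNReal.ofReal_le_ofReal hεle) hρr)
    refine le_trans (measure_mono ?_) (this.trans (ENNReal.ofReal_le_ofReal ?_))
    · intro y hy
      rcases hy with ⟨hy1, hy2⟩
      simp only [mem_singleton_iff] at hy2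
      subst hy2
      exact ⟨⟨mem_ball_self hεpos, by simp⟩, hy1⟩
    · rw [Real.zero_rpow hυ.ne']; simp
  exact le_antisymm (ge_of_tendsto' hlim hbound) zero_le

lemma aux_annuli {M : Type*} [MetricSpace M] [MeasurableSpace M] [BorelSpace M]
    (Y : Set M) (hYm : MeasurableSet Y) (ν : Measure M) {υ c : ℝ} (hυ : 0 < υ) (hc : 0 < c)
    {r₀ : ℝ≥0∞} (x : M) (hxnull : ν (Y ∩ {x}) = 0)
    (hreg : ∀ r₁ r₂ : ℝ, 0 ≤ r₁ → r₁ < r₂ → ENNReal.ofReal r₂ < r₀ →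
      ν ((ball x r₂ \ ball x r₁) ∩ Y) ≤ ENNReal.ofReal (c * (r₂ ^ υ - r₁ ^ υ)))
    {s : ℝ} (hs : 0 < s) (hsr : ENNReal.ofReal s < r₀) :
    ∫⁻ y in Y ∩ ball x s, ENNReal.ofReal (dist x y ^ (1 - υ)) ∂ν ≤
      ENNReal.ofReal (2 * max 1 ((2:ℝ) ^ (υ - 1)) * c * s) := by
  set Cu : ℝ := max 1 ((2:ℝ) ^ (υ - 1)) with hCu
  have hCu1 : (1:ℝ) ≤ Cu := le_max_left _ _
  have hCu0 : 0 < Cu := lt_of_lt_of_le one_pos hCu1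
  set t : ℕ → ℝ := fun k => s * (1/2 : ℝ) ^ k with ht
  have htpos : ∀ k, 0 < t k := fun k => by positivity
  have htle : ∀ k, t k ≤ s := by
    intro k
    have h : (1/2:ℝ) ^ k ≤ 1 := pow_le_one₀ (by norm_num) (by norm_num)
    show s * (1/2:ℝ) ^ k ≤ s
    nlinarith
  have htsucc : ∀ k, t (k + 1) = t k * (1/2) := by
    intro k; simp only [ht, pow_succ]; ring
  have htlt : ∀ k, t (k+1) < t k := by
    intro k; rw [htsucc]; nlinarith [htpos k]
  set A : ℕ → Set M := fun k => Y ∩ (ball x (t k) \ ball x (t (k+1))) with hA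
  have hAm : ∀ k, MeasurableSet (A k) :=
    fun k => hYm.inter (measurableSet_ball.diff measurableSet_ball)
  have hae : (Y ∩ ball x s : Set M) =ᵐ[ν] ((Y ∩ ball x s) \ {x} : Set M) := by
    rw [MeasureTheory.ae_eq_set]
    constructor
    · refine measure_mono_null ?_ hxnull
      intro y hy
      rcases hy with ⟨hy1, hy2⟩
      simp only [mem_diff, not_and, not_not] at hy2
      exact ⟨hy1.1, hy2 hy1⟩
    · refine measure_mono_null ?_ (measure_empty (μ := ν))
      intro y hy
      exact (hy.2 hy.1.1).elim
  rw [setLIntegral_congr hae]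
  have hsub : ((Y ∩ ball x s) \ {x} : Set M) ⊆ ⋃ k, A k := by
    rintro y ⟨⟨hyY, hyb⟩, hyx⟩
    simp only [mem_singleton_iff] at hyx
    have hd0 : 0 < dist y x := dist_pos.2 hyx
    have hds : dist y x < s := mem_ball.1 hyb
    have hex : ∃ k, t (k+1) ≤ dist y x := by
      obtain ⟨n, hn⟩ := exists_pow_lt_of_lt_one (div_pos hd0 hs) (by norm_num : (1/2:ℝ) < 1)
      refine ⟨n, ?_⟩
      have : t n < dist y x := by
        rw [ht]
        calc s * (1/2:ℝ)^n < s * (dist y x / s) := mul_lt_mul_of_pos_left hn hs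
          _ = dist y x := by field_simp
      exact le_of_lt (lt_of_lt_of_le (htlt n) this.le)
    set k := Nat.find hex with hk
    refine mem_iUnion.2 ⟨k, hyY, ?_, ?_⟩
    · show y ∈ ball x (t k)
      rw [mem_ball]
      rcases Nat.eq_zero_or_pos k with h0 | h0
      · rw [h0]; simpa [ht] using hds
      · obtain ⟨m, hm⟩ := Nat.exists_eq_succ_of_ne_zero h0.ne'
        have := Nat.find_min hex (m := m) (by omega)
        rw [hm]; exact lt_of_not_ge this
    · show y ∉ ball x (t (k+1))
      rw [mem_ball]
      exact not_lt.2 (Nat.find_spec hex)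
  refine le_trans (lintegral_mono_set hsub) ?_
  refine le_trans (lintegral_iUnion_le _ _) ?_
  have hterm : ∀ k, ∫⁻ y in A k, ENNReal.ofReal (dist x y ^ (1 - υ)) ∂ν ≤
      ENNReal.ofReal ((Cu * c * s) * (1/2:ℝ)^k) := by
    intro k
    have hpt : ∀ y ∈ A k, ENNReal.ofReal (dist x y ^ (1 - υ)) ≤
        ENNReal.ofReal (Cu * (t k) ^ (1 - υ)) := by
      rintro y ⟨hyY, hyb, hyb'⟩
      apply ENNReal.ofReal_le_ofReal
      have hdlt : dist x y < t k := by rw [dist_comm]; exact mem_ball.1 hyb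
      have hdge : t (k+1) ≤ dist x y := by
        rw [dist_comm]; exact not_lt.1 (by simpa [mem_ball] using hyb')
      have hd0 : 0 < dist x y := lt_of_lt_of_le (htpos (k+1)) hdge
      rcases le_or_gt υ 1 with h1 | h1
      · calc dist x y ^ (1-υ) ≤ (t k) ^ (1-υ) :=
              Real.rpow_le_rpow dist_nonneg hdlt.le (by linarith)
          _ ≤ Cu * (t k) ^ (1-υ) := le_mul_of_one_le_left (Real.rpow_nonneg (htpos k).le _) hCu1
      · have h2 : dist x y ^ (1-υ) ≤ (t (k+1)) ^ (1-υ) :=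
          Real.rpow_le_rpow_of_nonpos (htpos (k+1)) hdge (by linarith)
        have h3 : (t (k+1)) ^ (1-υ) = (t k) ^ (1-υ) * (2:ℝ) ^ (υ-1) := by
          rw [htsucc, Real.mul_rpow (htpos k).le (by norm_num), one_div,
            Real.inv_rpow (by norm_num : (0:ℝ) ≤ 2), ← Real.rpow_neg (by norm_num : (0:ℝ) ≤ 2),
            neg_sub]
        calc dist x y ^ (1-υ) ≤ (t k) ^ (1-υ) * (2:ℝ) ^ (υ-1) := by rw [← h3]; exact h2
          _ ≤ (t k) ^ (1-υ) * Cu :=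
              mul_le_mul_of_nonneg_left (le_max_right _ _) (Real.rpow_nonneg (htpos k).le _)
          _ = Cu * (t k) ^ (1-υ) := mul_comm _ _
    have hmeas : ν (A k) ≤ ENNReal.ofReal (c * (t k) ^ υ) := by
      have := hreg (t (k+1)) (t k) (htpos (k+1)).le (htlt k)
        (lt_of_le_of_lt (ENNReal.ofReal_le_ofReal (htle k)) hsr)
      rw [hA]
      refine le_trans (le_of_eq (by rw [inter_comm])) (this.trans (ENNReal.ofReal_le_ofReal ?_))
      have : 0 ≤ (t (k+1)) ^ υ := Real.rpow_nonneg (htpos (k+1)).le _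
      nlinarith
    calc ∫⁻ y in A k, ENNReal.ofReal (dist x y ^ (1 - υ)) ∂ν
        ≤ ∫⁻ _ in A k, ENNReal.ofReal (Cu * (t k) ^ (1 - υ)) ∂ν :=
          setLIntegral_mono' (hAm k) hpt
      _ = ENNReal.ofReal (Cu * (t k) ^ (1 - υ)) * ν (A k) := setLIntegral_const _ _
      _ ≤ ENNReal.ofReal (Cu * (t k) ^ (1 - υ)) * ENNReal.ofReal (c * (t k) ^ υ) :=
          mul_le_mul_right hmeas _
      _ = ENNReal.ofReal ((Cu * (t k) ^ (1 - υ)) * (c * (t k) ^ υ)) :=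
          (ENNReal.ofReal_mul (by positivity)).symm
      _ = ENNReal.ofReal ((Cu * c * s) * (1/2:ℝ)^k) := by
          congr 1
          have h4 : (t k) ^ (1 - υ) * (t k) ^ υ = t k := by
            rw [← Real.rpow_add (htpos k), sub_add_cancel, Real.rpow_one]
          calc (Cu * (t k) ^ (1 - υ)) * (c * (t k) ^ υ)
              = Cu * c * ((t k) ^ (1-υ) * (t k) ^ υ) := by ring
            _ = Cu * c * t k := by rw [h4]
            _ = (Cu * c * s) * (1/2:ℝ)^k := by rw [ht]; ring
  refine le_trans (ENNReal.tsum_le_tsum hterm) ?_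
  have hgeo : ∑' k : ℕ, ENNReal.ofReal ((Cu * c * s) * (1/2:ℝ)^k)
      = ENNReal.ofReal (Cu * c * s) * 2 := by
    have h12 : ENNReal.ofReal ((1:ℝ)/2) = (2:ℝ≥0∞)⁻¹ := by
      rw [one_div, ENNReal.ofReal_inv_of_pos (by norm_num : (0:ℝ) < 2)]
      norm_num
    calc ∑' k : ℕ, ENNReal.ofReal ((Cu * c * s) * (1/2:ℝ)^k)
        = ∑' k : ℕ, ENNReal.ofReal (Cu * c * s) * ENNReal.ofReal ((1/2:ℝ)^k) :=
          tsum_congr fun k => ENNReal.ofReal_mul (by positivity)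
      _ = ENNReal.ofReal (Cu * c * s) * ∑' k : ℕ, ENNReal.ofReal ((1/2:ℝ)^k) :=
          ENNReal.tsum_mul_left
      _ = ENNReal.ofReal (Cu * c * s) * ∑' k : ℕ, ((2:ℝ≥0∞)⁻¹)^k := by
          rw [tsum_congr fun k : ℕ => by
            rw [ENNReal.ofReal_pow (by norm_num : (0:ℝ) ≤ 1/2), h12]]
      _ = ENNReal.ofReal (Cu * c * s) * 2 := by
          rw [ENNReal.tsum_geometric]
          congr 1
          have h1 : (1:ℝ≥0∞) - 2⁻¹ = 2⁻¹ := by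
            rw [← ENNReal.inv_two_add_inv_two]
            exact ENNReal.add_sub_cancel_right (by norm_num)
          rw [h1, inv_inv]
  rw [hgeo]
  have : ENNReal.ofReal (Cu * c * s) * 2 = ENNReal.ofReal (2 * Cu * c * s) := by
    rw [← ENNReal.ofReal_ofNat 2, ← ENNReal.ofReal_mul (by positivity)]
    congr 1; ring
  rw [this]

theorem stmt_7 {M : Type*} [MetricSpace M] [MeasurableSpace M] [BorelSpace M]
    (X Y : Set M) (ν : Measure M) (hYm : MeasurableSet Y)
    (υ β s₂ s₃ : ℝ)
    (hυ : 0 < υ) (hβ0 : 0 < β) (hβ1 : β ≤ 1) (hs₂ : β ≤ s₂) (hs₃0 : 0 < s₃) (hs₃1 : s₃ ≤ 1)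
    (hball : ∀ x ∈ X, ∀ r : ℝ, 0 < r → ν (ball x r ∩ Y) < ⊤)
    (hYfin : ν Y < ⊤)
    (ha : ∃ a : ℝ, 0 < a ∧ ∀ ρ : ℝ, 0 < ρ → ρ < a → ∀ x' ∈ X, ∃ x'' ∈ X, dist x' x'' = ρ)
    (h1 : s₂ - β = υ) (h2 : β < s₃)
    (hreg : StronglyUpperAhlforsRegular ν X Y υ)
    (Z : M → M → ℂ) (hZ : MemK X Y υ s₂ s₃ Z)
    (hQ : ∃ C : ℝ, 0 < C ∧ ∀ g : M → ℂ, IsHolderOn (X ∪ Y) β g →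
      BoundedOnSet X (Qop ν Y Z g) ∧
      IsHolderOn X β (Qop ν Y Z g) ∧
      supNormOn X (Qop ν Y Z g) + holderSemi X β (Qop ν Y Z g) ≤
        C * holderSemi (X ∪ Y) β g) :
    BddAbove (maxFunSet ν X Y Z) := by
  classical
  obtain ⟨C, hC, hQop⟩ := hQ
  obtain ⟨a, ha0, hdense⟩ := ha
  obtain ⟨c, hc, r₀, hr₀, hregB⟩ := hreg
  obtain ⟨hZcont, hK₁, -⟩ := hZ
  -- kernel bound
  set N₁ : ℝ := max 0 (sSup (kernelSet₁ X Y υ Z)) with hN₁def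
  have hN₁0 : 0 ≤ N₁ := le_max_left _ _
  have hN₁ : ∀ x' ∈ X, ∀ y ∈ Y, x' ≠ y → ‖Z x' y‖ ≤ N₁ / dist x' y ^ υ := by
    intro x' hx' y hy hxy
    have hd : 0 < dist x' y := dist_pos.2 hxy
    have hmem : dist x' y ^ υ * ‖Z x' y‖ ∈ kernelSet₁ X Y υ Z := ⟨x', hx', y, hy, hxy, rfl⟩
    have h := (le_csSup hK₁ hmem).trans (le_max_right 0 _)
    rw [le_div_iff₀ (Real.rpow_pos_of_pos hd υ)]
    rw [hN₁def]; nlinarith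
  -- real radius below r₀
  obtain ⟨ρ₀, -, hρ₀pos', hρ₀lt⟩ := ENNReal.lt_iff_exists_real_btwn.1 hr₀
  have hρ₀ : 0 < ρ₀ := ENNReal.ofReal_pos.1 hρ₀pos'
  set Cu : ℝ := max 1 ((2:ℝ) ^ (υ - 1)) with hCudef
  have hCu0 : (0:ℝ) < Cu := lt_of_lt_of_le one_pos (le_max_left _ _)
  set c₂ : ℝ := 2 * Cu * c with hc₂def
  have hc₂ : 0 < c₂ := by positivity
  have hnull : ∀ x' ∈ X, ν (Y ∩ {x'}) = 0 := fun x' hx' =>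
    aux_singleton_null Y ν hυ hρ₀ hρ₀lt x' (fun r₁ r₂ h1 h2 h3 => hregB x' hx' r₁ r₂ h1 h2 h3)
  have hI : ∀ x' ∈ X, ∀ s : ℝ, 0 < s → s ≤ ρ₀ →
      ∫⁻ y in Y ∩ ball x' s, ENNReal.ofReal (dist x' y ^ (1 - υ)) ∂ν ≤
        ENNReal.ofReal (c₂ * s) := by
    intro x' hx' s hs hsρ
    have h := aux_annuli Y hYm ν hυ hc x' (hnull x' hx')
      (fun r₁ r₂ h1 h2 h3 => hregB x' hx' r₁ r₂ h1 h2 h3) hs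
      (lt_of_le_of_lt (ENNReal.ofReal_le_ofReal hsρ) hρ₀lt)
    exact h
  set T : ℝ := min a ρ₀ / 4 with hT
  have hT0 : 0 < T := div_pos (lt_min ha0 hρ₀) (by norm_num)
  refine ⟨max (N₁ / T ^ υ * (ν Y).toReal) (C + 3 * (c₂ * N₁)), ?_⟩
  rintro w ⟨x, hx, r, hr, rfl⟩
  rcases le_or_gt T r with hTr | hrT
  · -- LARGE radii
    refine le_trans ?_ (le_max_left _ _)
    have hpt : ∀ y ∈ Y \ ball x r,
        ENNReal.ofReal ‖Z x y‖ ≤ ENNReal.ofReal (N₁ / T ^ υ) := by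
      intro y hy
      apply ENNReal.ofReal_le_ofReal
      have hd : r ≤ dist y x := not_lt.1 fun h => hy.2 (mem_ball.2 h)
      have hd' : T ≤ dist x y := by rw [dist_comm]; linarith
      have hxy : x ≠ y := by
        intro h
        rw [h, dist_self] at hd'
        linarith
      refine (hN₁ x hx y hy.1 hxy).trans ?_
      exact div_le_div_of_nonneg_left hN₁0 (Real.rpow_pos_of_pos hT0 υ)
        (Real.rpow_le_rpow hT0.le hd' hυ.le)
    have hchain : ∫⁻ y in Y \ ball x r, ENNReal.ofReal ‖Z x y‖ ∂ν ≤
        ENNReal.ofReal (N₁ / T ^ υ) * ν Y := by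
      calc ∫⁻ y in Y \ ball x r, ENNReal.ofReal ‖Z x y‖ ∂ν
          ≤ ∫⁻ _ in Y \ ball x r, ENNReal.ofReal (N₁ / T ^ υ) ∂ν :=
            setLIntegral_mono' (hYm.diff measurableSet_ball) hpt
        _ = ENNReal.ofReal (N₁ / T ^ υ) * ν (Y \ ball x r) := setLIntegral_const _ _
        _ ≤ ENNReal.ofReal (N₁ / T ^ υ) * ν Y :=
            mul_le_mul_right (measure_mono diff_subset) _
    calc ‖∫ y in Y \ ball x r, Z x y ∂ν‖
        ≤ (∫⁻ y in Y \ ball x r, ENNReal.ofReal ‖Z x y‖ ∂ν).toReal :=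
          norm_integral_le_lintegral_norm _
      _ ≤ (ENNReal.ofReal (N₁ / T ^ υ) * ν Y).toReal :=
          ENNReal.toReal_mono (ENNReal.mul_ne_top ENNReal.ofReal_ne_top hYfin.ne) hchain
      _ = N₁ / T ^ υ * (ν Y).toReal := by
          rw [ENNReal.toReal_mul, ENNReal.toReal_ofReal (by positivity)]
  · -- SMALL radii
    refine le_trans ?_ (le_max_right _ _)
    have hminρ : min a ρ₀ ≤ ρ₀ := min_le_right _ _
    have hmina : min a ρ₀ ≤ a := min_le_left _ _
    have hra : r < a := by rw [hT] at hrT; linarith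
    have hrρ : r ≤ ρ₀ := by rw [hT] at hrT; linarith
    have h2rρ : 2 * r ≤ ρ₀ := by rw [hT] at hrT; linarith
    obtain ⟨x'', hx'', hdist⟩ := hdense r hr hra x hx
    have hxne : x ≠ x'' := by
      intro h
      rw [h, dist_self] at hdist
      exact hr.ne hdist
    -- the test function
    set g : M → ℂ := fun y => ((min 1 (dist x y / r) : ℝ) : ℂ) with hg
    have hgx : g x = 0 := by simp [hg, dist_self]
    have hgx'' : g x'' = 1 := by
      simp [hg, hdist, div_self hr.ne']
    have hgval : ∀ y, ‖g y‖ = min 1 (dist x y / r) := by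
      intro y
      rw [hg]
      simp only [Complex.norm_real, Real.norm_eq_abs]
      exact abs_of_nonneg (le_min zero_le_one (div_nonneg dist_nonneg hr.le))
    have hrβ : 0 < r ^ β := Real.rpow_pos_of_pos hr β
    -- Hölder seminorm estimate for g
    have hgkey : ∀ u v : M, ‖g u - g v‖ ≤ (dist u v / r) ^ β := by
      intro u v
      have h0 : ‖g u - g v‖ = |min 1 (dist x u / r) - min 1 (dist x v / r)| := by
        rw [hg, ← Complex.ofReal_sub, Complex.norm_real, Real.norm_eq_abs]
      rw [h0]
      have h2 : |dist x u / r - dist x v / r| ≤ dist u v / r := by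
        rw [div_sub_div_same, abs_div, abs_of_pos hr]
        apply div_le_div_of_nonneg_right ?_ hr.le
        rw [dist_comm x u, dist_comm x v]
        exact abs_dist_sub_le u v x
      have h3 : |min 1 (dist x u / r) - min 1 (dist x v / r)| ≤ min 1 (dist u v / r) := by
        refine le_min ?_ ((aux_abs_min_sub _ _).trans h2)
        have hu1 : min 1 (dist x u / r) ≤ 1 := min_le_left _ _
        have hv1 : min 1 (dist x v / r) ≤ 1 := min_le_left _ _
        have hu0 : 0 ≤ min 1 (dist x u / r) :=
          le_min zero_le_one (div_nonneg dist_nonneg hr.le)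
        have hv0 : 0 ≤ min 1 (dist x v / r) :=
          le_min zero_le_one (div_nonneg dist_nonneg hr.le)
        rw [abs_le]
        constructor <;> linarith
      exact h3.trans (aux_min_le_rpow hβ0 hβ1 (div_nonneg dist_nonneg hr.le))
    have hgH : ∀ u v : M, u ≠ v → ‖g u - g v‖ / dist u v ^ β ≤ (r ^ β)⁻¹ := by
      intro u v huv
      have hd : 0 < dist u v := dist_pos.2 huv
      rw [div_le_iff₀ (Real.rpow_pos_of_pos hd β)]
      have h5 := hgkey u v
      rw [Real.div_rpow dist_nonneg hr.le] at h5
      calc ‖g u - g v‖ ≤ dist u v ^ β / r ^ β := h5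
        _ = (r ^ β)⁻¹ * dist u v ^ β := by ring
    have hgHol : IsHolderOn (X ∪ Y) β g := by
      refine ⟨(r ^ β)⁻¹, ?_⟩
      rintro w ⟨u, hu, v, hv, huv, rfl⟩
      exact hgH u v huv
    have hsemi : holderSemi (X ∪ Y) β g ≤ (r ^ β)⁻¹ := by
      apply Real.sSup_le ?_ (inv_nonneg.2 hrβ.le)
      rintro w ⟨u, hu, v, hv, huv, rfl⟩
      exact hgH u v huv
    obtain ⟨hQb, hQH, hQbound⟩ := hQop g hgHol
    have hsupp0 : 0 ≤ supNormOn X (Qop ν Y Z g) :=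
      le_trans (norm_nonneg _) (le_csSup hQb ⟨x, hx, rfl⟩)
    have hsemiQ : holderSemi X β (Qop ν Y Z g) ≤ C * (r ^ β)⁻¹ := by
      have h6 : C * holderSemi (X ∪ Y) β g ≤ C * (r ^ β)⁻¹ :=
        mul_le_mul_of_nonneg_left hsemi hC.le
      linarith
    have hdiff : ‖Qop ν Y Z g x - Qop ν Y Z g x''‖ ≤ C := by
      have hmem : ‖Qop ν Y Z g x - Qop ν Y Z g x''‖ / dist x x'' ^ β ∈
          holderSet X β (Qop ν Y Z g) := ⟨x, hx, x'', hx'', hxne, rfl⟩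
      have h7 := (le_csSup hQH hmem).trans hsemiQ
      rw [hdist, div_le_iff₀ hrβ] at h7
      calc ‖Qop ν Y Z g x - Qop ν Y Z g x''‖ ≤ C * (r ^ β)⁻¹ * r ^ β := h7
        _ = C := by field_simp
    -- pointwise bound near x
    have hptx : ∀ y ∈ Y ∩ ball x r, ENNReal.ofReal ‖Z x y * (g x - g y)‖ ≤
        ENNReal.ofReal (N₁ / r * dist x y ^ (1 - υ)) := by
      rintro y ⟨hyY, hyb⟩
      apply ENNReal.ofReal_le_ofReal
      rcases eq_or_ne x y with rfl | hxy
      · rw [sub_self, mul_zero, norm_zero]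
        positivity
      · have hd : 0 < dist x y := dist_pos.2 hxy
        have hZb := hN₁ x hx y hyY hxy
        have hgyb : ‖g x - g y‖ ≤ dist x y / r := by
          rw [hgx, zero_sub, norm_neg, hgval]
          exact min_le_right _ _
        calc ‖Z x y * (g x - g y)‖ = ‖Z x y‖ * ‖g x - g y‖ := norm_mul _ _
          _ ≤ (N₁ / dist x y ^ υ) * (dist x y / r) :=
              mul_le_mul hZb hgyb (norm_nonneg _) (by positivity)
          _ = N₁ / r * dist x y ^ (1 - υ) := by
              rw [Real.rpow_sub hd, Real.rpow_one]
              ring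
    have hnear : ∫⁻ y in Y ∩ ball x r, ENNReal.ofReal ‖Z x y * (g x - g y)‖ ∂ν ≤
        ENNReal.ofReal (c₂ * N₁) := by
      calc ∫⁻ y in Y ∩ ball x r, ENNReal.ofReal ‖Z x y * (g x - g y)‖ ∂ν
          ≤ ∫⁻ y in Y ∩ ball x r, ENNReal.ofReal (N₁ / r * dist x y ^ (1 - υ)) ∂ν :=
            setLIntegral_mono' (hYm.inter measurableSet_ball) hptx
        _ = ∫⁻ y in Y ∩ ball x r,
              ENNReal.ofReal (N₁ / r) * ENNReal.ofReal (dist x y ^ (1 - υ)) ∂ν :=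
            lintegral_congr fun y => ENNReal.ofReal_mul (by positivity)
        _ = ENNReal.ofReal (N₁ / r) *
              ∫⁻ y in Y ∩ ball x r, ENNReal.ofReal (dist x y ^ (1 - υ)) ∂ν :=
            lintegral_const_mul' _ _ ENNReal.ofReal_ne_top
        _ ≤ ENNReal.ofReal (N₁ / r) * ENNReal.ofReal (c₂ * r) :=
            mul_le_mul_right (hI x hx r hr hrρ) _
        _ = ENNReal.ofReal (N₁ / r * (c₂ * r)) := (ENNReal.ofReal_mul (by positivity)).symm
        _ = ENNReal.ofReal (c₂ * N₁) := by
            congr 1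
            field_simp
    -- integrability of the integrand of Q at x
    have hdisj : Disjoint (Y ∩ ball x r) (Y \ ball x r) :=
      Set.disjoint_left.2 fun y hy1 hy2 => hy2.2 hy1.2
    have hgcont : Continuous g := by
      rw [hg]
      exact Complex.continuous_ofReal.comp
        (continuous_const.min ((continuous_const.dist continuous_id).div_const r))
    have haesm : AEStronglyMeasurable (fun y => Z x y * (g x - g y)) (ν.restrict Y) := by
      have hYae : (Y : Set M) =ᵐ[ν] (Y \ {x} : Set M) := by
        rw [MeasureTheory.ae_eq_set]
        constructor
        · refine measure_mono_null ?_ (hnull x hx)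
          intro y hy
          rcases hy with ⟨hy1, hy2⟩
          simp only [mem_diff, not_and, not_not] at hy2
          exact ⟨hy1, hy2 hy1⟩
        · refine measure_mono_null ?_ (measure_empty (μ := ν))
          intro y hy
          exact (hy.2 hy.1.1).elim
      rw [Measure.restrict_congr_set hYae]
      have hZx : ContinuousOn (fun y => Z x y) (Y \ {x}) := by
        have heq : (fun y => Z x y) = (fun p : M × M => Z p.1 p.2) ∘ (fun y => (x, y)) := rfl
        rw [heq]
        apply hZcont.comp (continuous_const.prodMk continuous_id).continuousOn
        intro y hy
        refine ⟨⟨hx, hy.1⟩, ?_⟩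
        simp only [mem_setOf_eq]
        intro h
        exact hy.2 (mem_singleton_iff.2 (by simpa using h.symm))
      exact (hZx.mul ((continuous_const.sub hgcont).continuousOn)).aestronglyMeasurable
        (hYm.diff (measurableSet_singleton x))
    have hptfar : ∀ y ∈ Y \ ball x r, ENNReal.ofReal ‖Z x y * (g x - g y)‖ ≤
        ENNReal.ofReal (N₁ / r ^ υ) := by
      intro y hy
      apply ENNReal.ofReal_le_ofReal
      have hd : r ≤ dist y x := not_lt.1 fun h => hy.2 (mem_ball.2 h)
      have hd' : r ≤ dist x y := by rw [dist_comm]; linarith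
      have hxy : x ≠ y := by
        intro h
        rw [h, dist_self] at hd'
        linarith
      have hgyb : ‖g x - g y‖ ≤ 1 := by
        rw [hgx, zero_sub, norm_neg, hgval]
        exact min_le_left _ _
      calc ‖Z x y * (g x - g y)‖ = ‖Z x y‖ * ‖g x - g y‖ := norm_mul _ _
        _ ≤ (N₁ / dist x y ^ υ) * 1 := mul_le_mul (hN₁ x hx y hy.1 hxy) hgyb
            (norm_nonneg _) (by positivity)
        _ = N₁ / dist x y ^ υ := mul_one _
        _ ≤ N₁ / r ^ υ := div_le_div_of_nonneg_left hN₁0 (Real.rpow_pos_of_pos hr υ)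
            (Real.rpow_le_rpow hr.le hd' hυ.le)
    have hint : IntegrableOn (fun y => Z x y * (g x - g y)) Y ν := by
      refine ⟨haesm, ?_⟩
      rw [hasFiniteIntegral_def]
      have hnn : ∀ y : M, ((‖Z x y * (g x - g y)‖₊ : NNReal) : ℝ≥0∞) =
          ENNReal.ofReal ‖Z x y * (g x - g y)‖ :=
        fun y => (ofReal_norm_eq_enorm _).symm
      calc ∫⁻ y in Y, ((‖Z x y * (g x - g y)‖₊ : NNReal) : ℝ≥0∞) ∂ν
          = ∫⁻ y in Y, ENNReal.ofReal ‖Z x y * (g x - g y)‖ ∂ν :=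
            lintegral_congr fun y => hnn y
        _ = (∫⁻ y in Y ∩ ball x r, ENNReal.ofReal ‖Z x y * (g x - g y)‖ ∂ν) +
            ∫⁻ y in Y \ ball x r, ENNReal.ofReal ‖Z x y * (g x - g y)‖ ∂ν := by
            conv_lhs => rw [← Set.inter_union_diff Y (ball x r)]
            exact lintegral_union (hYm.diff measurableSet_ball) hdisj
        _ < ⊤ := by
            apply ENNReal.add_lt_top.2
            constructor
            · exact lt_of_le_of_lt hnear ENNReal.ofReal_lt_top
            · calc ∫⁻ y in Y \ ball x r, ENNReal.ofReal ‖Z x y * (g x - g y)‖ ∂ν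
                  ≤ ∫⁻ _ in Y \ ball x r, ENNReal.ofReal (N₁ / r ^ υ) ∂ν :=
                    setLIntegral_mono' (hYm.diff measurableSet_ball) hptfar
                _ = ENNReal.ofReal (N₁ / r ^ υ) * ν (Y \ ball x r) := setLIntegral_const _ _
                _ ≤ ENNReal.ofReal (N₁ / r ^ υ) * ν Y :=
                    mul_le_mul_right (measure_mono diff_subset) _
                _ < ⊤ := ENNReal.mul_lt_top ENNReal.ofReal_lt_top hYfin
    -- splitting of Q at x
    have hsplit : Qop ν Y Z g x =
        (∫ y in Y ∩ ball x r, Z x y * (g x - g y) ∂ν) +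
          ∫ y in Y \ ball x r, Z x y * (g x - g y) ∂ν := by
      show (∫ y in Y, Z x y * (g x - g y) ∂ν) = _
      conv_lhs => rw [← Set.inter_union_diff Y (ball x r)]
      exact setIntegral_union hdisj (hYm.diff measurableSet_ball)
        (hint.mono_set inter_subset_left) (hint.mono_set diff_subset)
    have hgone : ∀ y ∈ Y \ ball x r, g y = 1 := by
      intro y hy
      have hd : r ≤ dist y x := not_lt.1 fun h => hy.2 (mem_ball.2 h)
      have hd' : r ≤ dist x y := by rw [dist_comm]; linarith
      show ((min 1 (dist x y / r) : ℝ) : ℂ) = 1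
      rw [min_eq_left ((one_le_div hr).2 hd')]
      norm_num
    have hfar : ∫ y in Y \ ball x r, Z x y * (g x - g y) ∂ν =
        -∫ y in Y \ ball x r, Z x y ∂ν := by
      rw [← integral_neg]
      apply setIntegral_congr_fun (hYm.diff measurableSet_ball)
      intro y hy
      show Z x y * (g x - g y) = -Z x y
      rw [hgx, hgone y hy]
      ring
    -- bound for Q at x''
    have hptx'' : ∀ y ∈ Y ∩ ball x r, ENNReal.ofReal ‖Z x'' y * (g x'' - g y)‖ ≤
        ENNReal.ofReal (N₁ / r * dist x'' y ^ (1 - υ)) := by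
      rintro y ⟨hyY, hyb⟩
      apply ENNReal.ofReal_le_ofReal
      have hdxy : dist x y < r := by rw [dist_comm]; exact mem_ball.1 hyb
      have hgy : g y = ((dist x y / r : ℝ) : ℂ) := by
        show ((min 1 (dist x y / r) : ℝ) : ℂ) = _
        rw [min_eq_right ((div_le_one hr).2 hdxy.le)]
      have hfac0 : 0 ≤ 1 - dist x y / r := by
        rw [sub_nonneg, div_le_one hr]
        exact hdxy.le
      have hnorm2 : ‖g x'' - g y‖ = 1 - dist x y / r := by
        rw [hgx'', hgy, show (1:ℂ) = ((1:ℝ):ℂ) by norm_num, ← Complex.ofReal_sub,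
          Complex.norm_real, Real.norm_eq_abs, abs_of_nonneg hfac0]
      have htri : r - dist x y ≤ dist x'' y := by
        have := dist_triangle x y x''
        rw [dist_comm x'' y, dist_comm y x''] at *
        linarith [dist_triangle x y x'', hdist ▸ le_refl r]
      rcases eq_or_ne x'' y with rfl | hxy''
      · rw [sub_self, mul_zero, norm_zero]
        positivity
      · have hd0 : 0 < dist x'' y := dist_pos.2 hxy''
        have hkey : 1 - dist x y / r ≤ dist x'' y / r := by
          rw [show (1:ℝ) - dist x y / r = (r - dist x y) / r by field_simp]
          exact div_le_div_of_nonneg_right htri hr.le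
        calc ‖Z x'' y * (g x'' - g y)‖ = ‖Z x'' y‖ * (1 - dist x y / r) := by
              rw [norm_mul, hnorm2]
          _ ≤ (N₁ / dist x'' y ^ υ) * (dist x'' y / r) :=
              mul_le_mul (hN₁ x'' hx'' y hyY hxy'') hkey hfac0 (by positivity)
          _ = N₁ / r * dist x'' y ^ (1 - υ) := by
              rw [Real.rpow_sub hd0, Real.rpow_one]
              ring
    have hsubset2 : Y ∩ ball x r ⊆ Y ∩ ball x'' (2 * r) := by
      rintro y ⟨hyY, hyb⟩
      refine ⟨hyY, mem_ball.2 ?_⟩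
      have h8 : dist y x < r := mem_ball.1 hyb
      calc dist y x'' ≤ dist y x + dist x x'' := dist_triangle _ _ _
        _ < r + r := by rw [hdist]; linarith
        _ = 2 * r := by ring
    have hQx'' : ‖Qop ν Y Z g x''‖ ≤ 2 * (c₂ * N₁) := by
      have hchain : ∫⁻ y in Y, ENNReal.ofReal ‖Z x'' y * (g x'' - g y)‖ ∂ν ≤
          ENNReal.ofReal (2 * (c₂ * N₁)) := by
        conv_lhs => rw [← Set.inter_union_diff Y (ball x r)]
        rw [lintegral_union (hYm.diff measurableSet_ball) hdisj]
        have hfar0 : ∫⁻ y in Y \ ball x r, ENNReal.ofReal ‖Z x'' y * (g x'' - g y)‖ ∂ν = 0 := by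
          have h9 : ∀ y ∈ Y \ ball x r,
              ENNReal.ofReal ‖Z x'' y * (g x'' - g y)‖ = (0:ℝ≥0∞) := by
            intro y hy
            rw [hgx'', hgone y hy, sub_self, mul_zero, norm_zero, ENNReal.ofReal_zero]
          rw [setLIntegral_congr_fun (hYm.diff measurableSet_ball) h9]
          simp
        rw [hfar0, add_zero]
        calc ∫⁻ y in Y ∩ ball x r, ENNReal.ofReal ‖Z x'' y * (g x'' - g y)‖ ∂ν
            ≤ ∫⁻ y in Y ∩ ball x r, ENNReal.ofReal (N₁ / r * dist x'' y ^ (1 - υ)) ∂ν :=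
              setLIntegral_mono' (hYm.inter measurableSet_ball) hptx''
          _ ≤ ∫⁻ y in Y ∩ ball x'' (2 * r), ENNReal.ofReal (N₁ / r * dist x'' y ^ (1 - υ)) ∂ν :=
              lintegral_mono_set hsubset2
          _ = ∫⁻ y in Y ∩ ball x'' (2 * r),
                ENNReal.ofReal (N₁ / r) * ENNReal.ofReal (dist x'' y ^ (1 - υ)) ∂ν :=
              lintegral_congr fun y => ENNReal.ofReal_mul (by positivity)
          _ = ENNReal.ofReal (N₁ / r) *
                ∫⁻ y in Y ∩ ball x'' (2 * r), ENNReal.ofReal (dist x'' y ^ (1 - υ)) ∂ν :=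
              lintegral_const_mul' _ _ ENNReal.ofReal_ne_top
          _ ≤ ENNReal.ofReal (N₁ / r) * ENNReal.ofReal (c₂ * (2 * r)) :=
              mul_le_mul_right (hI x'' hx'' (2 * r) (by linarith) h2rρ) _
          _ = ENNReal.ofReal (N₁ / r * (c₂ * (2 * r))) :=
              (ENNReal.ofReal_mul (by positivity)).symm
          _ = ENNReal.ofReal (2 * (c₂ * N₁)) := by
              congr 1
              field_simp
      exact (norm_integral_le_lintegral_norm _).trans
        (ENNReal.toReal_le_of_le_ofReal (by positivity) hchain)
    have hnearnorm : ‖∫ y in Y ∩ ball x r, Z x y * (g x - g y) ∂ν‖ ≤ c₂ * N₁ :=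
      (norm_integral_le_lintegral_norm _).trans
        (ENNReal.toReal_le_of_le_ofReal (by positivity) hnear)
    have hQxnorm : ‖Qop ν Y Z g x‖ ≤ C + 2 * (c₂ * N₁) := by
      calc ‖Qop ν Y Z g x‖ = ‖(Qop ν Y Z g x - Qop ν Y Z g x'') + Qop ν Y Z g x''‖ := by
            ring_nf
        _ ≤ ‖Qop ν Y Z g x - Qop ν Y Z g x''‖ + ‖Qop ν Y Z g x''‖ := norm_add_le _ _
        _ ≤ C + 2 * (c₂ * N₁) := add_le_add hdiff hQx''
    have heq : ∫ y in Y \ ball x r, Z x y ∂ν =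
        (∫ y in Y ∩ ball x r, Z x y * (g x - g y) ∂ν) - Qop ν Y Z g x := by
      rw [hsplit, hfar]
      ring
    rw [heq]
    calc ‖(∫ y in Y ∩ ball x r, Z x y * (g x - g y) ∂ν) - Qop ν Y Z g x‖
        ≤ ‖∫ y in Y ∩ ball x r, Z x y * (g x - g y) ∂ν‖ + ‖Qop ν Y Z g x‖ :=
          norm_sub_le _ _
      _ ≤ c₂ * N₁ + (C + 2 * (c₂ * N₁)) := add_le_add hnearnorm hQxnorm
      _ = C + 3 * (c₂ * N₁) := by ring
end
end

section
/- Let (M,d) be a metric space and X, Y ⊆ M. Assume there exists a ∈ (0,∞) such that for each ρ ∈ (0,a) and each x' ∈ X there exists x'' ∈ X with d(x',x'') = ρ. Let υ_Y ∈ (0,∞), β ∈ (0,1], s₂ ∈ [β,∞), s₃ ∈ (0,1], with s₂ − β < υ_Y. Let ν be a measure on a σ-algebra of subsets of Y containing the Borel subsets of Y, with ν(B(x,r) ∩ Y) < ∞ for all x ∈ X and r > 0, and ν(Y) < ∞. Let Y be upper υ_Y-Ahlfors regular with respect to X and let Z ∈ 𝒦_{υ_Y,s₂,s₃}(X×Y).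 If there exists C > 0 such that for every g ∈ C^{0,β}(X∪Y) the function Q[Z,g,1] is bounded and min{β,s₃}-Hölder continuous on X with sup-norm plus Hölder seminorm at most C·|g|_β, then sup over x ∈ X and r ∈ (0, e^{−1/s₃}) of |∫_{Y\B(x,r)} Z(x,y) dν(y)| · r^β / max{r^β, r^{s₃}} is finite. -/
open MeasureTheory Metric Set
open scoped ENNReal

noncomputable section

variable {M : Type*} [MetricSpace M] [MeasurableSpace M] [BorelSpace M]

open scoped NNReal in
private lemma real_rpow_add_le {p : ℝ} (hp : 0 ≤ p) (hp1 : p ≤ 1) {x y : ℝ}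
    (hx : 0 ≤ x) (hy : 0 ≤ y) : (x + y) ^ p ≤ x ^ p + y ^ p := by
  have h := NNReal.rpow_add_le_add_rpow x.toNNReal y.toNNReal hp hp1
  have hxy : ((x.toNNReal + y.toNNReal : ℝ≥0) : ℝ) = x + y := by
    push_cast [Real.coe_toNNReal x hx, Real.coe_toNNReal y hy]; ring
  calc (x + y) ^ p = ((x.toNNReal + y.toNNReal : ℝ≥0) : ℝ) ^ p := by rw [hxy]
    _ = (((x.toNNReal + y.toNNReal) ^ p : ℝ≥0) : ℝ) := by rw [NNReal.coe_rpow]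
    _ ≤ ((x.toNNReal ^ p + y.toNNReal ^ p : ℝ≥0) : ℝ) := by exact_mod_cast h
    _ = x ^ p + y ^ p := by
        push_cast [NNReal.coe_rpow, Real.coe_toNNReal x hx, Real.coe_toNNReal y hy]; ring

private lemma abs_rpow_sub_rpow_le {β : ℝ} (hβ0 : 0 < β) (hβ1 : β ≤ 1) {a b : ℝ}
    (ha : 0 ≤ a) (hb : 0 ≤ b) : |a ^ β - b ^ β| ≤ |a - b| ^ β := by
  wlog hab : b ≤ a generalizing a b
  · rw [abs_sub_comm (a ^ β), abs_sub_comm a b]; exact this hb ha (le_of_not_ge hab)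
  have h1 : a ^ β ≤ (a - b) ^ β + b ^ β := by
    have := real_rpow_add_le hβ0.le hβ1 (sub_nonneg.2 hab) hb
    simpa using this
  have h2 : b ^ β ≤ a ^ β := Real.rpow_le_rpow hb hab hβ0.le
  rw [abs_of_nonneg (sub_nonneg.2 h2), abs_of_nonneg (sub_nonneg.2 hab)]
  linarith

private lemma integrableOn_of_bound {ν : Measure M} {f : M → ℂ} {S : Set M}
    (hS : MeasurableSet S) (hν : ν S < ⊤) (hm : AEStronglyMeasurable f (ν.restrict S))
    {C : ℝ} (hb : ∀ y ∈ S, ‖f y‖ ≤ C) : IntegrableOn f S ν := by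
  refine Integrable.mono' (g := fun _ => C) ?_ hm ?_
  · exact integrableOn_const hν.ne enorm_ne_top
  · exact (ae_restrict_iff' hS).2 (ae_of_all _ hb)

private lemma contOn_mul_of_vanish {X Y : Set M} {Z : M → M → ℂ}
    (hZc : ContinuousOn (fun p : M × M => Z p.1 p.2) ((X ×ˢ Y) \ {p : M × M | p.1 = p.2}))
    {p : M} (hp : p ∈ X) {h : M → ℂ} (hh : Continuous h) {ε : ℝ} (hε : 0 < ε)
    (hvan : ∀ y, dist y p < ε → h y = 0) :
    ContinuousOn (fun y => Z p y * h y) Y := by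
  have hZp : ContinuousOn (fun y => Z p y) (Y \ {p}) := by
    have hmap : Set.MapsTo (fun y => (p, y)) (Y \ {p})
        ((X ×ˢ Y) \ {q : M × M | q.1 = q.2}) := by
      intro y hy
      refine ⟨⟨hp, hy.1⟩, ?_⟩
      simp only [Set.mem_setOf_eq]
      exact fun hpy => hy.2 (by simp [← hpy])
    exact hZc.comp ((continuous_const.prodMk continuous_id).continuousOn) hmap
  intro y hy
  rcases eq_or_ne y p with rfl | hyp
  · refine (continuousWithinAt_const (b := (0:ℂ))).congr_of_eventuallyEq ?_ ?_
    · filter_upwards [mem_nhdsWithin_of_mem_nhds (Metric.ball_mem_nhds y hε)] with z hz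
      rw [hvan z (by simpa [dist_comm] using hz), mul_zero]
    · rw [hvan y (by simpa using hε), mul_zero]
  · have h1 : ContinuousWithinAt (fun y => Z p y) Y y := by
      refine (hZp y ⟨hy, hyp⟩).mono_of_mem_nhdsWithin ?_
      rw [diff_eq]
      exact Filter.inter_mem self_mem_nhdsWithin
        (mem_nhdsWithin_of_mem_nhds ((isOpen_compl_singleton).mem_nhds hyp))
    exact h1.mul hh.continuousWithinAt

set_option maxHeartbeats 1000000 in
theorem stmt_8 {M : Type*} [MetricSpace M] [MeasurableSpace M] [BorelSpace M]
    (X Y : Set M) (ν : Measure M) (hYm : MeasurableSet Y)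
    (υ β s₂ s₃ : ℝ)
    (hυ : 0 < υ) (hβ0 : 0 < β) (hβ1 : β ≤ 1) (hs₂ : β ≤ s₂) (hs₃0 : 0 < s₃) (hs₃1 : s₃ ≤ 1)
    (hball : ∀ x ∈ X, ∀ r : ℝ, 0 < r → ν (ball x r ∩ Y) < ⊤)
    (hYfin : ν Y < ⊤)
    (ha : ∃ a : ℝ, 0 < a ∧ ∀ ρ : ℝ, 0 < ρ → ρ < a → ∀ x' ∈ X, ∃ x'' ∈ X, dist x' x'' = ρ)
    (h1 : s₂ - β < υ)
    (hreg : UpperAhlforsRegular ν X Y υ)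
    (Z : M → M → ℂ) (hZ : MemK X Y υ s₂ s₃ Z)
    (hQ : ∃ C : ℝ, 0 < C ∧ ∀ g : M → ℂ, IsHolderOn (X ∪ Y) β g →
      BoundedOnSet X (Qop ν Y Z g) ∧
      IsHolderOn X (min β s₃) (Qop ν Y Z g) ∧
      supNormOn X (Qop ν Y Z g) + holderSemi X (min β s₃) (Qop ν Y Z g) ≤
        C * holderSemi (X ∪ Y) β g) :
    BddAbove {t : ℝ | ∃ x ∈ X, ∃ r : ℝ, 0 < r ∧ r < Real.exp (-1 / s₃) ∧
      t = ‖∫ y in Y \ ball x r, Z x y ∂ν‖ * r ^ β /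
        max (r ^ β) (r ^ s₃)} := by
  classical
  obtain ⟨c, hc, r₀, hr₀, hAhl⟩ := hreg
  obtain ⟨a, ha0, hXd⟩ := ha
  obtain ⟨C, hC, hQ'⟩ := hQ
  set m : ℝ := min β s₃ with hm
  have hm0 : 0 < m := lt_min hβ0 hs₃0
  have hmβ : m ≤ β := min_le_left _ _
  have hm1 : m ≤ 1 := le_trans (min_le_right _ _) hs₃1
  set K₁ : ℝ := sSup (kernelSet₁ X Y υ Z) with hK₁def
  have hK₁0 : 0 ≤ K₁ := Real.sSup_nonneg fun t ht => by
    obtain ⟨x, hx, y, hy, hxy, rfl⟩ := ht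
    positivity
  have hZbd : ∀ x ∈ X, ∀ y ∈ Y, ∀ ρ : ℝ, 0 < ρ → ρ ≤ dist x y → ‖Z x y‖ ≤ K₁ / ρ ^ υ := by
    intro x hx y hy ρ hρ hρd
    have hd : 0 < dist x y := lt_of_lt_of_le hρ hρd
    have hxy : x ≠ y := by rw [← dist_pos]; exact hd
    have hmem : dist x y ^ υ * ‖Z x y‖ ∈ kernelSet₁ X Y υ Z := ⟨x, hx, y, hy, hxy, rfl⟩
    have hle := le_csSup hZ.2.1 hmem
    have hdυ : (0:ℝ) < dist x y ^ υ := Real.rpow_pos_of_pos hd _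
    have hρυ : (0:ℝ) < ρ ^ υ := Real.rpow_pos_of_pos hρ _
    have h2 : ‖Z x y‖ ≤ K₁ / dist x y ^ υ := by
      rw [le_div_iff₀ hdυ, mul_comm]; exact hle
    refine h2.trans ?_
    have h3 : (1:ℝ) / dist x y ^ υ ≤ 1 / ρ ^ υ :=
      one_div_le_one_div_of_le hρυ (Real.rpow_le_rpow hρ.le hρd hυ.le)
    calc K₁ / dist x y ^ υ = K₁ * (1 / dist x y ^ υ) := by ring
      _ ≤ K₁ * (1 / ρ ^ υ) := mul_le_mul_of_nonneg_left h3 hK₁0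
      _ = K₁ / ρ ^ υ := by ring
  have ht₀ex : ∃ t₀ : ℝ, 0 < t₀ ∧ ∀ r : ℝ, 0 < r → r < t₀ → ENNReal.ofReal r < r₀ := by
    rcases eq_or_ne r₀ ⊤ with h | h
    · exact ⟨1, one_pos, fun r _ _ => h ▸ ENNReal.ofReal_lt_top⟩
    · refine ⟨r₀.toReal, ENNReal.toReal_pos hr₀.ne' h, fun r hr hrt => ?_⟩
      rw [← ENNReal.ofReal_toReal h]
      exact (ENNReal.ofReal_lt_ofReal_iff (ENNReal.toReal_pos hr₀.ne' h)).2 hrt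
  obtain ⟨t₀, ht₀0, ht₀⟩ := ht₀ex
  set δ : ℝ := min (a/2) (t₀/2) with hδdef
  have hδ0 : 0 < δ := lt_min (by linarith) (by linarith)
  have hAhl' : ∀ x ∈ X, ∀ r : ℝ, 0 < r → r < δ → (ν (Y ∩ ball x r)).toReal ≤ c * r ^ υ := by
    intro x hx r hr hrδ
    have hδt : δ ≤ t₀ / 2 := min_le_right _ _
    have h2 := hAhl x hx r hr (ht₀ r hr (by linarith))
    rw [inter_comm] at h2
    exact ENNReal.toReal_le_of_le_ofReal (by positivity) h2
  set Bd : ℝ := K₁ / δ ^ υ * (ν Y).toReal + (c * K₁ * (1 + 2 ^ υ) + 4 * C) with hBd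
  refine ⟨Bd, ?_⟩
  rintro t ⟨x, hx, r, hr, hre, rfl⟩
  have hr1 : r < 1 := by
    refine lt_trans hre (Real.exp_lt_one_iff.2 ?_)
    have : (0:ℝ) < 1 / s₃ := by positivity
    rw [neg_div]
    linarith
  have hrβ : (0:ℝ) < r ^ β := Real.rpow_pos_of_pos hr _
  have hmax : (0:ℝ) < max (r ^ β) (r ^ s₃) := lt_max_iff.2 (Or.inl hrβ)
  have hcontZ : ContinuousOn (fun y => Z x y) (Y \ {x}) := by
    have hmap : Set.MapsTo (fun y => (x, y)) (Y \ {x})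
        ((X ×ˢ Y) \ {q : M × M | q.1 = q.2}) := by
      intro y hy
      exact ⟨⟨hx, hy.1⟩, fun hpy => hy.2 (by simpa using hpy.symm)⟩
    exact hZ.1.comp ((continuous_const.prodMk continuous_id).continuousOn) hmap
  have hmeasXB : MeasurableSet (Y \ ball x r) := hYm.diff measurableSet_ball
  have hνYB : ν (Y \ ball x r) < ⊤ := lt_of_le_of_lt (measure_mono diff_subset) hYfin
  have hAESM : AEStronglyMeasurable (fun y => Z x y) (ν.restrict (Y \ ball x r)) :=
    (hcontZ.mono (diff_subset_diff_right (singleton_subset_iff.2 (mem_ball_self hr)))).aestronglyMeasurable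
      hmeasXB
  have hBigNonneg : (0:ℝ) ≤ c * K₁ * (1 + 2 ^ υ) + 4 * C := by
    have h1 : (0:ℝ) ≤ c * K₁ * (1 + 2 ^ υ) :=
      mul_nonneg (mul_nonneg hc.le hK₁0) (by positivity)
    linarith
  have hSmallNonneg : (0:ℝ) ≤ K₁ / δ ^ υ * (ν Y).toReal :=
    mul_nonneg (div_nonneg hK₁0 (by positivity)) ENNReal.toReal_nonneg
  rcases le_or_gt δ r with hcase | hcase
  · -- large radius
    have hNb : ‖∫ y in Y \ ball x r, Z x y ∂ν‖ ≤ K₁ / δ ^ υ * (ν (Y \ ball x r)).toReal := by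
      refine norm_setIntegral_le_of_norm_le_const hνYB (fun y hy => ?_)
      refine hZbd x hx y hy.1 δ hδ0 ?_
      rw [dist_comm]
      have h2 : ¬ dist y x < r := fun h => hy.2 (mem_ball.2 h)
      push_neg at h2
      linarith
    have hN2 : ‖∫ y in Y \ ball x r, Z x y ∂ν‖ ≤ K₁ / δ ^ υ * (ν Y).toReal := by
      refine hNb.trans (mul_le_mul_of_nonneg_left ?_ (div_nonneg hK₁0 (by positivity)))
      exact ENNReal.toReal_mono hYfin.ne (measure_mono diff_subset)
    have hfrac : ‖∫ y in Y \ ball x r, Z x y ∂ν‖ * r ^ β / max (r ^ β) (r ^ s₃)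
        ≤ ‖∫ y in Y \ ball x r, Z x y ∂ν‖ := by
      rw [mul_div_assoc]
      refine mul_le_of_le_one_right (norm_nonneg _) ?_
      exact div_le_one_of_le₀ (le_max_left _ _) hmax.le
    refine hfrac.trans (hN2.trans ?_)
    rw [hBd]
    linarith
  · -- small radius
    have h2r : 2 * r < a := by
      have h3 : δ ≤ a / 2 := min_le_left _ _
      linarith
    obtain ⟨x'', hx'', hdxx⟩ := hXd (2 * r) (by linarith) h2r x hx
    have hxx'' : x ≠ x'' := by
      intro h
      rw [h, dist_self] at hdxx
      linarith
    set φ : ℝ → ℝ := fun u => min (max (2 * u - r) 0) r with hφdef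
    set gr : M → ℝ := fun z => φ (dist z x) ^ β with hgrdef
    set g : M → ℂ := fun z => ((gr z : ℝ) : ℂ) with hgdef
    have hφ0 : ∀ u, 0 ≤ φ u := fun u => le_min (le_max_right _ _) hr.le
    have hφr : ∀ u, φ u ≤ r := fun u => min_le_right _ _
    have hgr0 : ∀ z, 0 ≤ gr z := fun z => Real.rpow_nonneg (hφ0 _) _
    have hgrr : ∀ z, gr z ≤ r ^ β := fun z => Real.rpow_le_rpow (hφ0 _) (hφr _) hβ0.le
    have hgr_small : ∀ z, dist z x ≤ r / 2 → gr z = 0 := by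
      intro z hz
      have h1 : φ (dist z x) = 0 := by
        simp only [hφdef]
        rw [max_eq_right (by linarith), min_eq_left hr.le]
      simp only [hgrdef, h1]
      exact Real.zero_rpow (ne_of_gt hβ0)
    have hgr_big : ∀ z, r ≤ dist z x → gr z = r ^ β := by
      intro z hz
      have h1 : φ (dist z x) = r := by
        simp only [hφdef]
        rw [max_eq_left (by linarith), min_eq_right (by linarith)]
      simp only [hgrdef, h1]
    have hgr_lip : ∀ z w : M, |gr z - gr w| ≤ (2 * dist z w) ^ β := by
      intro z w
      have h2 : |φ (dist z x) - φ (dist w x)| ≤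
          |max (2 * dist z x - r) 0 - max (2 * dist w x - r) 0| := by
        simp only [hφdef]
        refine le_trans (abs_min_sub_min_le_max _ _ _ _) ?_
        simp
      have h3 : |max (2 * dist z x - r) 0 - max (2 * dist w x - r) 0| ≤
          |(2 * dist z x - r) - (2 * dist w x - r)| := abs_max_sub_max_le_abs _ _ _
      have h4 : |(2 * dist z x - r) - (2 * dist w x - r)| = 2 * |dist z x - dist w x| := by
        rw [show (2 * dist z x - r) - (2 * dist w x - r) = 2 * (dist z x - dist w x) by ring,
          abs_mul]
        norm_num
      have h5 : |dist z x - dist w x| ≤ dist z w := abs_dist_sub_le _ _ _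
      have h1 : |φ (dist z x) - φ (dist w x)| ≤ 2 * dist z w := by
        refine (h2.trans h3).trans ?_
        rw [h4]
        linarith
      calc |gr z - gr w| ≤ |φ (dist z x) - φ (dist w x)| ^ β := by
            simp only [hgrdef]
            exact abs_rpow_sub_rpow_le hβ0 hβ1 (hφ0 _) (hφ0 _)
        _ ≤ (2 * dist z w) ^ β := Real.rpow_le_rpow (abs_nonneg _) h1 hβ0.le
    have hg_bound : ∀ z w : M, ‖g z - g w‖ ≤ r ^ β := by
      intro z w
      simp only [hgdef]
      rw [← Complex.ofReal_sub, Complex.norm_real, Real.norm_eq_abs, abs_le]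
      constructor
      · linarith [hgr0 z, hgrr w]
      · linarith [hgr0 w, hgrr z]
    have hquot : ∀ z w : M, z ≠ w → ‖g z - g w‖ / dist z w ^ β ≤ 2 ^ β := by
      intro z w hzw
      have hd : 0 < dist z w := dist_pos.2 hzw
      have hdβ : 0 < dist z w ^ β := Real.rpow_pos_of_pos hd _
      rw [div_le_iff₀ hdβ]
      have h1 : ‖g z - g w‖ ≤ (2 * dist z w) ^ β := by
        simp only [hgdef]
        rw [← Complex.ofReal_sub, Complex.norm_real, Real.norm_eq_abs]
        exact hgr_lip z w
      refine h1.trans ?_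
      rw [Real.mul_rpow (by norm_num) dist_nonneg]
    have hgH : IsHolderOn (X ∪ Y) β g := by
      refine ⟨2 ^ β, ?_⟩
      rintro t ⟨z, hz, w, hw, hzw, rfl⟩
      exact hquot z w hzw
    have hgsemi : holderSemi (X ∪ Y) β g ≤ 2 ^ β := by
      refine Real.sSup_le ?_ (by positivity)
      rintro t ⟨z, hz, w, hw, hzw, rfl⟩
      exact hquot z w hzw
    obtain ⟨hQbdd, hQhold, hQest⟩ := hQ' g hgH
    have hsupn : 0 ≤ supNormOn X (Qop ν Y Z g) :=
      Real.sSup_nonneg fun t ht => by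
        obtain ⟨z, hz, rfl⟩ := ht
        positivity
    have hH : holderSemi X m (Qop ν Y Z g) ≤ C * 2 ^ β := by
      have h2 : C * holderSemi (X ∪ Y) β g ≤ C * 2 ^ β :=
        mul_le_mul_of_nonneg_left hgsemi hC.le
      linarith
    have hQQ : ‖Qop ν Y Z g x - Qop ν Y Z g x''‖ ≤ C * 2 ^ β * (2 * r) ^ m := by
      have hmem : ‖Qop ν Y Z g x - Qop ν Y Z g x''‖ / dist x x'' ^ m ∈
          holderSet X m (Qop ν Y Z g) := ⟨x, hx, x'', hx'', hxx'', rfl⟩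
      have h2 := (le_csSup hQhold hmem).trans hH
      have hdm : 0 < dist x x'' ^ m :=
        Real.rpow_pos_of_pos (dist_pos.2 hxx'') _
      rw [div_le_iff₀ hdm] at h2
      rwa [hdxx] at h2
    have hgcont : Continuous g := by
      simp only [hgdef, hgrdef]
      refine Complex.continuous_ofReal.comp ?_
      have h1 : Continuous φ := by
        simp only [hφdef]
        fun_prop
      have h2 : Continuous (fun u : ℝ => u ^ β) :=
        continuous_iff_continuousAt.2 fun u => Real.continuousAt_rpow_const u β (Or.inr hβ0.le)
      exact h2.comp (h1.comp (continuous_id.dist continuous_const))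
    have hg_small : ∀ z, dist z x ≤ r / 2 → g z = 0 := by
      intro z hz
      simp only [hgdef, hgr_small z hz, Complex.ofReal_zero]
    have hgx : g x = 0 := hg_small x (by rw [dist_self]; positivity)
    have hcont₁ : ContinuousOn (fun y => Z x y * g y) Y :=
      contOn_mul_of_vanish hZ.1 hx hgcont (by positivity : (0:ℝ) < r / 2)
        (fun y hy => hg_small y hy.le)
    have hbd₁ : ∀ y ∈ Y, ‖Z x y * g y‖ ≤ K₁ / (r / 2) ^ υ * r ^ β := by
      intro y hy
      rcases le_or_gt (dist y x) (r / 2) with hdy | hdy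
      · rw [hg_small y hdy, mul_zero, norm_zero]
        exact mul_nonneg (div_nonneg hK₁0 (by positivity)) (by positivity)
      · rw [norm_mul]
        have h1 : ‖Z x y‖ ≤ K₁ / (r / 2) ^ υ := by
          refine hZbd x hx y hy (r / 2) (by positivity) ?_
          rw [dist_comm]
          linarith
        have h2 : ‖g y‖ ≤ r ^ β := by
          simp only [hgdef, Complex.norm_real, Real.norm_eq_abs]
          rw [abs_of_nonneg (hgr0 y)]
          exact hgrr y
        exact mul_le_mul h1 h2 (norm_nonneg _) (div_nonneg hK₁0 (by positivity))
    have hint₁ : IntegrableOn (fun y => Z x y * g y) Y ν :=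
      integrableOn_of_bound hYm hYfin (hcont₁.aestronglyMeasurable hYm) hbd₁
    have hmeasInt : MeasurableSet (Y ∩ ball x r) := hYm.inter measurableSet_ball
    have hνInt : ν (Y ∩ ball x r) < ⊤ := lt_of_le_of_lt (measure_mono inter_subset_left) hYfin
    have hsplit : ∫ y in Y, Z x y * g y ∂ν =
        (∫ y in Y \ ball x r, Z x y * g y ∂ν) + ∫ y in Y ∩ ball x r, Z x y * g y ∂ν := by
      conv_lhs => rw [← Set.diff_union_inter Y (ball x r)]
      exact setIntegral_union (Set.disjoint_sdiff_inter) hmeasInt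
        (hint₁.mono_set diff_subset) (hint₁.mono_set inter_subset_left)
    have hQxval : Qop ν Y Z g x = -∫ y in Y, Z x y * g y ∂ν := by
      rw [Qop]
      simp only [hgx, zero_sub, mul_neg]
      rw [integral_neg]
    have houter : ∫ y in Y \ ball x r, Z x y * g y ∂ν =
        (∫ y in Y \ ball x r, Z x y ∂ν) * ((r ^ β : ℝ) : ℂ) := by
      rw [← integral_mul_const]
      refine setIntegral_congr_fun hmeasXB fun y hy => ?_
      have h1 : r ≤ dist y x := not_lt.1 fun h => hy.2 (mem_ball.2 h)
      simp only [hgdef, hgr_big y h1]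
    have hinner : ‖∫ y in Y ∩ ball x r, Z x y * g y ∂ν‖ ≤ c * K₁ * 2 ^ υ * r ^ β := by
      have h1 : ‖∫ y in Y ∩ ball x r, Z x y * g y ∂ν‖ ≤
          K₁ / (r / 2) ^ υ * r ^ β * (ν (Y ∩ ball x r)).toReal :=
        norm_setIntegral_le_of_norm_le_const hνInt (fun y hy => hbd₁ y hy.1)
      have h2 : (ν (Y ∩ ball x r)).toReal ≤ c * r ^ υ := hAhl' x hx r hr hcase
      have h3 : K₁ / (r / 2) ^ υ * r ^ β * (ν (Y ∩ ball x r)).toReal ≤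
          K₁ / (r / 2) ^ υ * r ^ β * (c * r ^ υ) :=
        mul_le_mul_of_nonneg_left h2
          (mul_nonneg (div_nonneg hK₁0 (by positivity)) (by positivity))
      have h4 : K₁ / (r / 2) ^ υ * r ^ β * (c * r ^ υ) = c * K₁ * 2 ^ υ * r ^ β := by
        rw [Real.div_rpow hr.le (by norm_num : (0:ℝ) ≤ 2)]
        have hrυ : (0:ℝ) < r ^ υ := Real.rpow_pos_of_pos hr _
        have h2υ : (0:ℝ) < (2:ℝ) ^ υ := Real.rpow_pos_of_pos two_pos _
        field_simp
      linarith [h1.trans (h3.trans_eq h4)]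
    have hvan₂ : ∀ y, dist y x'' < r → g x'' - g y = 0 := by
      intro y hy
      have h3 := dist_triangle x y x''
      have h1 : r ≤ dist y x := by
        rw [hdxx] at h3
        rw [dist_comm y x]
        have h4 : dist y x'' < r := hy
        linarith
      have h2 : r ≤ dist x'' x := by
        rw [dist_comm, hdxx]
        linarith
      simp only [hgdef, hgr_big y h1, hgr_big x'' h2, sub_self]
    have hcont₂ : ContinuousOn (fun y => Z x'' y * (g x'' - g y)) Y :=
      contOn_mul_of_vanish hZ.1 hx'' (continuous_const.sub hgcont) hr hvan₂
    have hbd₂ : ∀ y ∈ Y, ‖Z x'' y * (g x'' - g y)‖ ≤ K₁ / r ^ υ * r ^ β := by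
      intro y hy
      rcases lt_or_ge (dist y x'') r with hdy | hdy
      · rw [hvan₂ y hdy, mul_zero, norm_zero]
        exact mul_nonneg (div_nonneg hK₁0 (by positivity)) (by positivity)
      · rw [norm_mul]
        have h1 : ‖Z x'' y‖ ≤ K₁ / r ^ υ := by
          refine hZbd x'' hx'' y hy r hr ?_
          rw [dist_comm]
          exact hdy
        exact mul_le_mul h1 (hg_bound x'' y) (norm_nonneg _)
          (div_nonneg hK₁0 (by positivity))
    have hint₂ : IntegrableOn (fun y => Z x'' y * (g x'' - g y)) Y ν :=
      integrableOn_of_bound hYm hYfin (hcont₂.aestronglyMeasurable hYm) hbd₂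
    have hQx''val : ‖Qop ν Y Z g x''‖ ≤ c * K₁ * r ^ β := by
      have hzero : ∫ y in Y \ ball x r, Z x'' y * (g x'' - g y) ∂ν = 0 := by
        calc ∫ y in Y \ ball x r, Z x'' y * (g x'' - g y) ∂ν
            = ∫ _ in Y \ ball x r, (0:ℂ) ∂ν := by
              refine setIntegral_congr_fun hmeasXB fun y hy => ?_
              have h1 : r ≤ dist y x := not_lt.1 fun h => hy.2 (mem_ball.2 h)
              have h2 : r ≤ dist x'' x := by
                rw [dist_comm, hdxx]
                linarith
              simp only [hgdef, hgr_big y h1, hgr_big x'' h2, sub_self, mul_zero]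
          _ = 0 := by simp
      have hsplit₂ : Qop ν Y Z g x'' =
          (∫ y in Y \ ball x r, Z x'' y * (g x'' - g y) ∂ν) +
          ∫ y in Y ∩ ball x r, Z x'' y * (g x'' - g y) ∂ν := by
        rw [Qop]
        conv_lhs => rw [← Set.diff_union_inter Y (ball x r)]
        exact setIntegral_union (Set.disjoint_sdiff_inter) hmeasInt
          (hint₂.mono_set diff_subset) (hint₂.mono_set inter_subset_left)
      rw [hsplit₂, hzero, zero_add]
      have h1 : ‖∫ y in Y ∩ ball x r, Z x'' y * (g x'' - g y) ∂ν‖ ≤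
          K₁ / r ^ υ * r ^ β * (ν (Y ∩ ball x r)).toReal :=
        norm_setIntegral_le_of_norm_le_const hνInt (fun y hy => hbd₂ y hy.1)
      have h2 : (ν (Y ∩ ball x r)).toReal ≤ c * r ^ υ := hAhl' x hx r hr hcase
      have h3 : K₁ / r ^ υ * r ^ β * (ν (Y ∩ ball x r)).toReal ≤
          K₁ / r ^ υ * r ^ β * (c * r ^ υ) :=
        mul_le_mul_of_nonneg_left h2
          (mul_nonneg (div_nonneg hK₁0 (by positivity)) (by positivity))
      have h4 : K₁ / r ^ υ * r ^ β * (c * r ^ υ) = c * K₁ * r ^ β := by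
        have hrυ : (0:ℝ) < r ^ υ := Real.rpow_pos_of_pos hr _
        field_simp
      linarith [h1.trans (h3.trans_eq h4)]
    have hkey : (∫ y in Y \ ball x r, Z x y ∂ν) * ((r ^ β : ℝ) : ℂ) =
        -(Qop ν Y Z g x) - ∫ y in Y ∩ ball x r, Z x y * g y ∂ν := by
      rw [← houter, hQxval, hsplit]
      ring
    have hQxbound : ‖Qop ν Y Z g x‖ ≤ c * K₁ * r ^ β + C * 2 ^ β * (2 * r) ^ m := by
      calc ‖Qop ν Y Z g x‖ = ‖Qop ν Y Z g x'' + (Qop ν Y Z g x - Qop ν Y Z g x'')‖ := by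
            ring_nf
        _ ≤ ‖Qop ν Y Z g x''‖ + ‖Qop ν Y Z g x - Qop ν Y Z g x''‖ := norm_add_le _ _
        _ ≤ c * K₁ * r ^ β + C * 2 ^ β * (2 * r) ^ m := add_le_add hQx''val hQQ
    have hNest : ‖∫ y in Y \ ball x r, Z x y ∂ν‖ * r ^ β ≤
        c * K₁ * (1 + 2 ^ υ) * r ^ β + C * 2 ^ β * (2 * r) ^ m := by
      have h0 : ‖∫ y in Y \ ball x r, Z x y ∂ν‖ * r ^ β =
          ‖(∫ y in Y \ ball x r, Z x y ∂ν) * ((r ^ β : ℝ) : ℂ)‖ := by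
        rw [norm_mul, Complex.norm_real, Real.norm_eq_abs, abs_of_nonneg hrβ.le]
      rw [h0, hkey]
      calc ‖-(Qop ν Y Z g x) - ∫ y in Y ∩ ball x r, Z x y * g y ∂ν‖
          ≤ ‖-(Qop ν Y Z g x)‖ + ‖∫ y in Y ∩ ball x r, Z x y * g y ∂ν‖ := norm_sub_le _ _
        _ = ‖Qop ν Y Z g x‖ + ‖∫ y in Y ∩ ball x r, Z x y * g y ∂ν‖ := by rw [norm_neg]
        _ ≤ (c * K₁ * r ^ β + C * 2 ^ β * (2 * r) ^ m) + c * K₁ * 2 ^ υ * r ^ β :=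
            add_le_add hQxbound hinner
        _ = c * K₁ * (1 + 2 ^ υ) * r ^ β + C * 2 ^ β * (2 * r) ^ m := by ring
    have hrm : (0:ℝ) < r ^ m := Real.rpow_pos_of_pos hr _
    have hrmmax : r ^ m ≤ max (r ^ β) (r ^ s₃) := by
      rcases le_total β s₃ with h | h
      · calc r ^ m = r ^ β := by rw [hm, min_eq_left h]
          _ ≤ _ := le_max_left _ _
      · calc r ^ m = r ^ s₃ := by rw [hm, min_eq_right h]
          _ ≤ _ := le_max_right _ _
    calc ‖∫ y in Y \ ball x r, Z x y ∂ν‖ * r ^ β / max (r ^ β) (r ^ s₃)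
        ≤ ‖∫ y in Y \ ball x r, Z x y ∂ν‖ * r ^ β / r ^ m :=
          div_le_div_of_nonneg_left (mul_nonneg (norm_nonneg _) hrβ.le) hrm hrmmax
      _ ≤ (c * K₁ * (1 + 2 ^ υ) * r ^ β + C * 2 ^ β * (2 * r) ^ m) / r ^ m := by
          gcongr
      _ = c * K₁ * (1 + 2 ^ υ) * (r ^ β / r ^ m) + C * 2 ^ β * ((2 * r) ^ m / r ^ m) := by
          ring
      _ ≤ c * K₁ * (1 + 2 ^ υ) * 1 + C * 2 ^ β * 2 ^ m := by
          have e1 : r ^ β / r ^ m = r ^ (β - m) := (Real.rpow_sub hr _ _).symm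
          have e2 : (2 * r) ^ m / r ^ m = 2 ^ m := by
            rw [Real.mul_rpow (by norm_num : (0:ℝ) ≤ 2) hr.le, mul_div_assoc,
              div_self hrm.ne', mul_one]
          rw [e1, e2]
          refine add_le_add (mul_le_mul_of_nonneg_left ?_ ?_) le_rfl
          · exact Real.rpow_le_one hr.le hr1.le (by linarith)
          · exact mul_nonneg (mul_nonneg hc.le hK₁0) (by positivity)
      _ ≤ c * K₁ * (1 + 2 ^ υ) + 4 * C := by
          have h2m : (2:ℝ) ^ m ≤ 2 := by
            calc (2:ℝ) ^ m ≤ 2 ^ (1:ℝ) := Real.rpow_le_rpow_of_exponent_le one_le_two hm1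
              _ = 2 := Real.rpow_one 2
          have h2β : (2:ℝ) ^ β ≤ 2 := by
            calc (2:ℝ) ^ β ≤ 2 ^ (1:ℝ) := Real.rpow_le_rpow_of_exponent_le one_le_two hβ1
              _ = 2 := Real.rpow_one 2
          have h2βpos : (0:ℝ) < 2 ^ β := Real.rpow_pos_of_pos two_pos _
          have h2mpos : (0:ℝ) < 2 ^ m := Real.rpow_pos_of_pos two_pos _
          have h5a : C * 2 ^ β ≤ C * 2 := mul_le_mul_of_nonneg_left h2β hC.le
          have h5 : C * 2 ^ β * 2 ^ m ≤ 4 * C := by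
            calc C * 2 ^ β * 2 ^ m ≤ C * 2 * 2 ^ m :=
                  mul_le_mul_of_nonneg_right h5a h2mpos.le
              _ ≤ C * 2 * 2 := mul_le_mul_of_nonneg_left h2m (by linarith)
              _ = 4 * C := by ring
          linarith
      _ ≤ Bd := by
          rw [hBd]
          linarith
end
end
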